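/- arXiv:1901.01385 — 7 statements merged into one kernel-verified Lean document; each statement's English description precedes it below -/
import Mathlib

section
/- Let K be an algebraically closed field and n ≥ 1. Let σ be an effective regular action of T_n = (K^×)^n on F_n = FreeAlgebra K (Fin n) that lifts the standard torus action on the polynomial algebra: for every t ∈ (Kˣ)^n and every i, the element σ(t)(z_i) − t_i • z_i lies in the commutator ideal ker ε_n. Then σ is conjugate to the standard action: there exists a K-algebra automorphism β of F_n such that (β⁻¹ ∘ σ(t) ∘ β)(z_i) = t_i • z_i for all t and i. -/
open FreeAlgebra

/-- A torus action `σ` of `(Kˣ)^r` on the free algebra is *regular* if the image of each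
generator depends on `t` as a Laurent polynomial with coefficients in the free algebra. -/
def TorusActionIsRegular {K : Type} [Field K] {n r : ℕ}
    (σ : (Fin r → Kˣ) →* (FreeAlgebra K (Fin n) ≃ₐ[K] FreeAlgebra K (Fin n))) : Prop :=
  ∀ i : Fin n, ∃ a : ((Fin r → ℤ) →₀ FreeAlgebra K (Fin n)),
    ∀ t : Fin r → Kˣ,
      σ t (ι K i) = a.sum fun m c => ((∏ j : Fin r, (t j) ^ (m j) : Kˣ) : K) • c

/-- The abelianization homomorphism from the free associative algebra to the commutative
polynomial algebra, sending each generator to the corresponding variable.  Its kernel is the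
commutator ideal. -/
noncomputable def abelianization (K : Type) [Field K] (n : ℕ) :
    FreeAlgebra K (Fin n) →ₐ[K] MvPolynomial (Fin n) K :=
  FreeAlgebra.lift K fun i => (MvPolynomial.X i : MvPolynomial (Fin n) K)

namespace TorusProofAux
open scoped Classical
variable {K : Type} [Field K] {n : ℕ}


variable {K : Type} [Field K] {n : ℕ}

/-- The character of the torus attached to an integer vector `m`. -/
def chr (m : Fin n → ℤ) (t : Fin n → Kˣ) : Kˣ := ∏ j, t j ^ m j

lemma chr_map_one (m : Fin n → ℤ) : chr (K := K) m 1 = 1 := by simp [chr]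

lemma chr_map_mul (m : Fin n → ℤ) (t s : Fin n → Kˣ) :
    chr m (t * s) = chr m t * chr m s := by
  simp [chr, mul_zpow, Finset.prod_mul_distrib]

lemma chr_zero (t : Fin n → Kˣ) : chr 0 t = 1 := by simp [chr]

lemma chr_add (m m' : Fin n → ℤ) (t : Fin n → Kˣ) :
    chr (m + m') t = chr m t * chr m' t := by
  simp [chr, zpow_add, Finset.prod_mul_distrib]

lemma exists_pow_ne_one [Infinite K] {k : ℤ} (hk : k ≠ 0) : ∃ u : Kˣ, u ^ k ≠ 1 := by
  have hN : k.natAbs ≠ 0 := Int.natAbs_ne_zero.2 hk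
  have hfin : {x : K | x ^ k.natAbs = 1}.Finite := by
    have : {x : K | x ^ k.natAbs = 1} ⊆ (Polynomial.X ^ k.natAbs - 1 : Polynomial K).rootSet K := by
      intro x hx
      rw [Polynomial.mem_rootSet]
      constructor
      · intro h
        have := congrArg (Polynomial.coeff · 0) h
        simp [Polynomial.coeff_X_pow, hN, Ne.symm hN] at this
      · simp [Polynomial.aeval_def, hx.out, Polynomial.eval₂_sub, sub_eq_zero]
    exact (Polynomial.rootSet_finite _ _).subset this
  obtain ⟨a, ha⟩ := ((hfin.union (Set.finite_singleton 0)).infinite_compl).nonempty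
  simp only [Set.mem_compl_iff, Set.mem_union, Set.mem_setOf_eq, Set.mem_singleton_iff,
    not_or] at ha
  refine ⟨Units.mk0 a ha.2, ?_⟩
  have hpow : (Units.mk0 a ha.2) ^ k.natAbs ≠ 1 := by
    intro h
    apply ha.1
    have := congrArg (Units.val) h
    simpa using this
  set u := Units.mk0 a ha.2 with hudef
  rcases Int.natAbs_eq k with h | h
  · rw [h]; rw [zpow_natCast]; exact hpow
  · rw [h]; rw [zpow_neg, zpow_natCast]
    intro hc
    exact hpow (by rw [← inv_inv (u ^ k.natAbs), hc, inv_one])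

lemma chr_sep [Infinite K] {m m' : Fin n → ℤ} (h : m ≠ m') :
    ∃ t : Fin n → Kˣ, chr (K := K) m t ≠ chr m' t := by
  obtain ⟨j0, hj0⟩ : ∃ j, m j ≠ m' j := by
    by_contra hc; push_neg at hc; exact h (funext hc)
  obtain ⟨u, hu⟩ := exists_pow_ne_one (K := K) (sub_ne_zero.2 hj0)
  refine ⟨Function.update (1 : Fin n → Kˣ) j0 u, ?_⟩
  have hval : ∀ m'' : Fin n → ℤ,
      chr (K := K) m'' (Function.update (1 : Fin n → Kˣ) j0 u) = u ^ m'' j0 := by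
    intro m''
    rw [chr, Finset.prod_eq_single j0]
    · simp
    · intro b _ hb; simp [Function.update_of_ne hb]
    · simp
  rw [hval, hval]
  intro hc
  apply hu
  rw [zpow_sub, hc, mul_inv_cancel]

/-- The character as a monoid homomorphism to `K`. -/
def chrHom (m : Fin n → ℤ) : (Fin n → Kˣ) →* K where
  toFun t := (chr m t : K)
  map_one' := by beta_reduce; rw [chr_map_one]; rfl
  map_mul' t s := by beta_reduce; rw [chr_map_mul]; rfl

lemma chrHom_injective [Infinite K] : Function.Injective (chrHom (K := K) (n := n)) := by
  intro m m' h
  by_contra hne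
  obtain ⟨t, ht⟩ := chr_sep (K := K) hne
  exact ht (Units.ext (by simpa [chrHom] using congrFun (congrArg (fun f => f.toFun) h) t))

lemma char_ext [Infinite K] {V : Type} [AddCommGroup V] [Module K V]
    (S : Finset (Fin n → ℤ)) (v : (Fin n → ℤ) → V)
    (h : ∀ t : Fin n → Kˣ, ∑ m ∈ S, (chr m t : K) • v m = 0) :
    ∀ m ∈ S, v m = 0 := by
  intro m0 hm0
  rw [← Module.forall_dual_apply_eq_zero_iff K]
  intro f
  have hli := (linearIndependent_monoidHom (Fin n → Kˣ) K).comp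
    (chrHom (K := K) (n := n)) chrHom_injective
  rw [linearIndependent_iff'] at hli
  refine hli S (fun m => f (v m)) ?_ m0 hm0
  funext t
  have := congrArg f (h t)
  simp only [map_sum, map_smul, map_zero, smul_eq_mul] at this ⊢
  simpa [Finset.sum_apply, chrHom, mul_comm] using this


noncomputable def EE : FreeAlgebra K (Fin n) ≃ₐ[K] MonoidAlgebra K (FreeMonoid (Fin n)) :=
  FreeAlgebra.equivMonoidAlgebraFreeMonoid

/-- The word monomials in the free algebra. -/
noncomputable def zeta : FreeMonoid (Fin n) →* FreeAlgebra K (Fin n) :=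
  FreeMonoid.lift (FreeAlgebra.ι K)

lemma zeta_of (i : Fin n) : zeta (K := K) (FreeMonoid.of i) = ι K i :=
  FreeMonoid.lift_eval_of _ i

lemma EE_ι (i : Fin n) : EE (K := K) (ι K i) = MonoidAlgebra.single (FreeMonoid.of i) 1 := by
  simp [EE, FreeAlgebra.equivMonoidAlgebraFreeMonoid]

lemma EE_zeta (w : FreeMonoid (Fin n)) :
    EE (K := K) (zeta w) = MonoidAlgebra.single w 1 := by
  induction w using FreeMonoid.recOn with
  | one => simp only [map_one, MonoidAlgebra.one_def]
  | of_mul x w ih =>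
      rw [map_mul, map_mul, zeta_of, EE_ι, ih, MonoidAlgebra.single_mul_single, one_mul]

/-- The coordinate of an element of the free algebra at a word. -/
noncomputable def coord (w : FreeMonoid (Fin n)) : FreeAlgebra K (Fin n) →ₗ[K] K :=
  (Finsupp.lapply w).comp ((MonoidAlgebra.coeffLinearEquiv K).toLinearMap.comp
    (EE (K := K)).toLinearEquiv.toLinearMap)

lemma coord_apply (w : FreeMonoid (Fin n)) (u : FreeAlgebra K (Fin n)) :
    coord w u = (EE u).coeff w := rfl

lemma coord_zeta (w w' : FreeMonoid (Fin n)) :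
    coord (K := K) w' (zeta w) = if w = w' then 1 else 0 := by
  rw [coord_apply, EE_zeta]; exact Finsupp.single_apply

/-- The submodule of elements supported on words of length at least `d`. -/
noncomputable def Gd (d : ℕ) : Submodule K (FreeAlgebra K (Fin n)) where
  carrier := {u | ∀ w ∈ (EE u).coeff.support, d ≤ FreeMonoid.length w}
  add_mem' := by
    intro u v hu hv w hw
    rw [map_add, MonoidAlgebra.coeff_add] at hw
    rcases Finset.mem_union.1 (Finsupp.support_add hw) with h | h
    exacts [hu w h, hv w h]
  zero_mem' := by simp
  smul_mem' := by
    intro c u hu w hw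
    rw [map_smul, MonoidAlgebra.coeff_smul] at hw
    exact hu w (Finsupp.support_smul hw)

lemma mem_Gd_iff {d : ℕ} {u : FreeAlgebra K (Fin n)} :
    u ∈ Gd d ↔ ∀ w ∈ (EE u).coeff.support, d ≤ FreeMonoid.length w := ⟨fun h => h, fun h => h⟩

lemma Gd_mono {d d' : ℕ} (h : d ≤ d') : Gd (K := K) (n := n) d' ≤ Gd d := by
  intro u hu
  rw [mem_Gd_iff] at hu ⊢
  exact fun w hw => le_trans h (hu w hw)

lemma mul_mem_Gd {a b : ℕ} {u v : FreeAlgebra K (Fin n)}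
    (hu : u ∈ Gd a) (hv : v ∈ Gd b) : u * v ∈ Gd (a + b) := by
  classical
  rw [mem_Gd_iff] at hu hv ⊢
  intro w hw
  rw [map_mul] at hw
  obtain ⟨w1, hw1, w2, hw2, rfl⟩ :=
    Finset.mem_mul.1 (MonoidAlgebra.support_coeff_mul_subset (EE u) (EE v) hw)
  rw [FreeMonoid.length_mul]
  exact add_le_add (hu w1 hw1) (hv w2 hw2)

lemma zeta_mem_Gd (w : FreeMonoid (Fin n)) :
    zeta (K := K) w ∈ Gd (FreeMonoid.length w) := by
  rw [mem_Gd_iff]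
  intro w' hw'
  rw [EE_zeta] at hw'
  have := Finsupp.support_single_subset hw'
  simp only [Finset.mem_singleton] at this
  subst this; exact le_refl _

lemma coord_eq_zero_of_Gd {d : ℕ} {u : FreeAlgebra K (Fin n)}
    (hu : u ∈ Gd d) {w : FreeMonoid (Fin n)} (hw : FreeMonoid.length w < d) :
    coord w u = 0 := by
  by_contra hc
  exact absurd (mem_Gd_iff.1 hu w (Finsupp.mem_support_iff.2 hc)) (not_le.2 hw)

lemma expand (u : FreeAlgebra K (Fin n)) :
    u = ∑ w ∈ (EE u).coeff.support, coord w u • zeta w := by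
  apply (EE (K := K)).injective
  rw [map_sum]
  conv_lhs => rw [← MonoidAlgebra.sum_coeff_single (EE u)]
  rw [Finsupp.sum]
  refine Finset.sum_congr rfl fun w _ => ?_
  rw [map_smul, EE_zeta, coord_apply, MonoidAlgebra.smul_single, smul_eq_mul, mul_one]

/-- The multidegree of a word, as an integer vector. -/
def degw (w : FreeMonoid (Fin n)) : Fin n → ℤ := fun j => (FreeMonoid.toList w).count j

lemma degw_one : degw (1 : FreeMonoid (Fin n)) = 0 := by
  funext j; simp [degw, FreeMonoid.toList_one]

lemma degw_mul (w w' : FreeMonoid (Fin n)) : degw (w * w') = degw w + degw w' := by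
  funext j; simp [degw, FreeMonoid.toList_mul, List.count_append]

/-- The `i`-th standard basis vector in `ℤ^n`. -/
def eI (i : Fin n) : Fin n → ℤ := fun j => if j = i then 1 else 0

lemma degw_of (i : Fin n) : degw (FreeMonoid.of i) = eI i := by
  funext j
  simp [degw, eI, FreeMonoid.toList_of, List.count_singleton', eq_comm]

lemma sum_degw (w : FreeMonoid (Fin n)) : ∑ j, degw w j = (FreeMonoid.length w : ℤ) := by
  have h1 : ∑ j, (FreeMonoid.toList w).count j = (FreeMonoid.toList w).length := by
    calc ∑ j : Fin n, (FreeMonoid.toList w).count j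
        = ∑ j : Fin n, Multiset.count j (↑(FreeMonoid.toList w) : Multiset (Fin n)) := by
          simp
      _ = Multiset.card (↑(FreeMonoid.toList w) : Multiset (Fin n)) :=
          Multiset.sum_count_eq_card (by simp)
      _ = (FreeMonoid.toList w).length := Multiset.coe_card _
  calc ∑ j, degw w j = ((∑ j, (FreeMonoid.toList w).count j : ℕ) : ℤ) := by
        push_cast [degw]; rfl
    _ = _ := by rw [h1]; rfl

lemma basis_eq_zeta (w : FreeMonoid (Fin n)) :
    FreeAlgebra.basisFreeMonoid K (Fin n) w = zeta w := by
  rw [FreeAlgebra.basisFreeMonoid, Module.Basis.map_apply]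
  apply (EE (K := K)).injective
  rw [EE_zeta]
  show EE (K := K) ((EE (K := K)).symm ((MonoidAlgebra.coeffLinearEquiv K).symm
    (Finsupp.basisSingleOne w))) = _
  rw [AlgEquiv.apply_symm_apply, Finsupp.coe_basisSingleOne]
  rfl

/-- The multidegree of a word, as a finitely supported function. -/
noncomputable def dF (w : FreeMonoid (Fin n)) : Fin n →₀ ℕ :=
  Finsupp.equivFunOnFinite.symm fun j => (FreeMonoid.toList w).count j

lemma dF_apply (w : FreeMonoid (Fin n)) (j : Fin n) :
    dF w j = (FreeMonoid.toList w).count j := rfl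

lemma dF_mul (w w' : FreeMonoid (Fin n)) : dF (w * w') = dF w + dF w' := by
  ext j; simp [dF_apply, FreeMonoid.toList_mul, List.count_append]

lemma dF_of (i : Fin n) : dF (FreeMonoid.of i) = Finsupp.single i 1 := by
  ext j
  simp [dF_apply, FreeMonoid.toList_of, List.count_singleton', Finsupp.single_apply, eq_comm]

lemma dF_one : dF (1 : FreeMonoid (Fin n)) = 0 := by
  ext j; simp [dF_apply, FreeMonoid.toList_one]

lemma sum_dF (w : FreeMonoid (Fin n)) : ∑ j, dF w j = FreeMonoid.length w := by
  classical
  calc ∑ j : Fin n, (FreeMonoid.toList w).count j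
      = ∑ j : Fin n, Multiset.count j (↑(FreeMonoid.toList w) : Multiset (Fin n)) := by simp
    _ = Multiset.card (↑(FreeMonoid.toList w) : Multiset (Fin n)) :=
        Multiset.sum_count_eq_card (by simp)
    _ = (FreeMonoid.toList w).length := Multiset.coe_card _

lemma dF_eq_zero_iff (w : FreeMonoid (Fin n)) : dF w = 0 ↔ w = 1 := by
  constructor
  · intro h
    have hl : FreeMonoid.length w = 0 := by
      rw [← sum_dF, h]; simp
    exact FreeMonoid.length_eq_zero.1 hl
  · rintro rfl; exact dF_one

lemma dF_eq_single_iff (w : FreeMonoid (Fin n)) (i : Fin n) :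
    dF w = Finsupp.single i 1 ↔ w = FreeMonoid.of i := by
  constructor
  · intro h
    have hl : FreeMonoid.length w = 1 := by
      rw [← sum_dF, h]
      simp [Finsupp.single_apply]
    obtain ⟨x, rfl⟩ := FreeMonoid.length_eq_one.1 hl
    have hx := DFunLike.congr_fun ((dF_of x).symm.trans h) x
    simp [Finsupp.single_apply] at hx
    by_cases hix : i = x
    · rw [hix]
    · exact absurd hx hix
  · rintro rfl; exact dF_of i

lemma abelianization_ι (i : Fin n) :
    abelianization K n (ι K i) = MvPolynomial.X i := by
  rw [abelianization, FreeAlgebra.lift_ι_apply]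

lemma eps_zeta (w : FreeMonoid (Fin n)) :
    abelianization K n (zeta w) = MvPolynomial.monomial (dF w) 1 := by
  induction w using FreeMonoid.recOn with
  | one => simp [dF_one]
  | of_mul x w ih =>
      rw [map_mul, map_mul, zeta_of, abelianization_ι, ih, dF_mul, dF_of]
      rw [MvPolynomial.X, MvPolynomial.monomial_mul, one_mul]

lemma coeff_eps_eq (u : FreeAlgebra K (Fin n)) (d : Fin n →₀ ℕ) (w0 : FreeMonoid (Fin n))
    (hchar : ∀ w : FreeMonoid (Fin n), dF w = d ↔ w = w0) :
    MvPolynomial.coeff d (abelianization K n u) = (EE u).coeff w0 := by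
  classical
  conv_lhs => rw [expand (K := K) u]
  simp only [coord_apply]
  rw [map_sum, MvPolynomial.coeff_sum]
  have : ∀ w ∈ (EE u).coeff.support,
      MvPolynomial.coeff d (abelianization K n ((EE u).coeff w • zeta w))
        = if w = w0 then (EE u).coeff w else 0 := by
    intro w _
    rw [map_smul, MvPolynomial.coeff_smul, eps_zeta, MvPolynomial.coeff_monomial]
    by_cases h : w = w0
    · rw [if_pos ((hchar w).2 h), if_pos h]; simp
    · rw [if_neg (fun hc => h ((hchar w).1 hc)), if_neg h]; simp
  rw [Finset.sum_congr rfl this, Finset.sum_ite_eq' (EE u).coeff.support w0 (fun w => (EE u).coeff w)]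
  by_cases h : w0 ∈ (EE u).coeff.support
  · rw [if_pos h]
  · rw [if_neg h, (Finsupp.notMem_support_iff.1 h)]

lemma ker_eps_mem_Gd2 {u : FreeAlgebra K (Fin n)}
    (hu : abelianization K n u = 0) :
    ∀ w ∈ (EE u).coeff.support, 2 ≤ FreeMonoid.length w := by
  classical
  intro w hw
  by_contra hlen
  push_neg at hlen
  interval_cases h : FreeMonoid.length w
  · -- length 0
    have hw1 : w = 1 := FreeMonoid.length_eq_zero.1 h
    have := coeff_eps_eq u 0 1 (fun w' => (dF_eq_zero_iff w'))
    rw [hu] at this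
    simp only [MvPolynomial.coeff_zero] at this
    exact Finsupp.mem_support_iff.1 hw (by rw [hw1, ← this])
  · -- length 1
    obtain ⟨x, hwx⟩ := FreeMonoid.length_eq_one.1 h
    have := coeff_eps_eq u (Finsupp.single x 1) (FreeMonoid.of x)
      (fun w' => dF_eq_single_iff w' x)
    rw [hu] at this
    simp only [MvPolynomial.coeff_zero] at this
    exact Finsupp.mem_support_iff.1 hw (by rw [hwx, ← this])

lemma chr_eI (i : Fin n) (t : Fin n → Kˣ) : chr (eI i) t = t i := by
  rw [chr, Finset.prod_eq_single i]
  · simp [eI]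
  · intro b _ hb; simp [eI, hb]
  · simp

lemma sub_mul_helper {R : Type} [Ring R] [Module K R] [SMulCommClass K R R]
    [IsScalarTower K R R] (A B a b : R) (s u : K) :
    A * B - (s * u) • (a * b)
      = (s • a) * (B - u • b) + ((A - s • a) * (u • b) + (A - s • a) * (B - u • b)) := by
  simp only [mul_sub, sub_mul, smul_mul_assoc, mul_smul_comm, smul_smul, mul_comm s u]
  abel

section Action
variable (σ : (Fin n → Kˣ) →* (FreeAlgebra K (Fin n) ≃ₐ[K] FreeAlgebra K (Fin n)))

/-- If `σ` moves generators by scalings modulo length-`≥2` corrections, its action on a word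
monomial is the corresponding character scaling modulo longer corrections. -/
lemma sigma_zeta_Gd (hσ2 : ∀ t i, σ t (ι K i) - (t i : K) • ι K i ∈ Gd 2)
    (t : Fin n → Kˣ) (w : FreeMonoid (Fin n)) :
    σ t (zeta w) - (chr (degw w) t : K) • zeta w ∈ Gd (FreeMonoid.length w + 1) := by
  induction w using FreeMonoid.recOn with
  | one =>
      simp only [map_one, degw_one, chr_zero, Units.val_one, one_smul, sub_self]
      exact Submodule.zero_mem _
  | of_mul x w ih =>
      have hιx : ι K x ∈ Gd (K := K) 1 := by
        have := zeta_mem_Gd (K := K) (FreeMonoid.of x)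
        rwa [zeta_of, FreeMonoid.length_of] at this
      have hgoal : σ t (zeta (FreeMonoid.of x * w))
          - (chr (degw (FreeMonoid.of x * w)) t : K) • zeta (FreeMonoid.of x * w)
          = ((t x : K) • ι K x) * (σ t (zeta w) - (chr (degw w) t : K) • zeta w)
            + ((σ t (ι K x) - (t x : K) • ι K x) * ((chr (degw w) t : K) • zeta w)
              + (σ t (ι K x) - (t x : K) • ι K x)
                * (σ t (zeta w) - (chr (degw w) t : K) • zeta w)) := by
        rw [map_mul, map_mul, zeta_of, degw_mul, degw_of, chr_add, chr_eI, Units.val_mul]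
        exact sub_mul_helper _ _ _ _ _ _
      rw [hgoal]
      have hlen : FreeMonoid.length (FreeMonoid.of x * w) + 1
          = 1 + (FreeMonoid.length w + 1) := by
        rw [FreeMonoid.length_mul, FreeMonoid.length_of]; omega
      rw [hlen]
      refine Submodule.add_mem _ ?_ (Submodule.add_mem _ ?_ ?_)
      · exact mul_mem_Gd (Submodule.smul_mem _ _ hιx) ih
      · exact Gd_mono (by omega)
          (mul_mem_Gd (hσ2 t x) (Submodule.smul_mem _ _ (zeta_mem_Gd w)))
      · exact Gd_mono (by omega) (mul_mem_Gd (hσ2 t x) ih)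

/-- Same triangularity for an algebra endomorphism `β` fixing generators modulo
length-`≥2` corrections. -/
lemma beta_zeta_Gd (β : FreeAlgebra K (Fin n) →ₐ[K] FreeAlgebra K (Fin n))
    (hβ1 : ∀ i, β (ι K i) - ι K i ∈ Gd 2) (w : FreeMonoid (Fin n)) :
    β (zeta w) - zeta w ∈ Gd (FreeMonoid.length w + 1) := by
  induction w using FreeMonoid.recOn with
  | one => simp only [map_one, sub_self]; exact Submodule.zero_mem _
  | of_mul x w ih =>
      have hιx : ι K x ∈ Gd (K := K) 1 := by
        have := zeta_mem_Gd (K := K) (FreeMonoid.of x)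
        rwa [zeta_of, FreeMonoid.length_of] at this
      have hgoal : β (zeta (FreeMonoid.of x * w)) - zeta (FreeMonoid.of x * w)
          = (ι K x) * (β (zeta w) - zeta w)
            + ((β (ι K x) - ι K x) * zeta w
              + (β (ι K x) - ι K x) * (β (zeta w) - zeta w)) := by
        have := sub_mul_helper (K := K) (β (ι K x)) (β (zeta w)) (ι K x) (zeta w) 1 1
        simp only [one_smul, one_mul, mul_one] at this
        rw [map_mul, map_mul, zeta_of]
        exact this
      rw [hgoal]
      have hlen : FreeMonoid.length (FreeMonoid.of x * w) + 1
          = 1 + (FreeMonoid.length w + 1) := by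
        rw [FreeMonoid.length_mul, FreeMonoid.length_of]; omega
      rw [hlen]
      refine Submodule.add_mem _ ?_ (Submodule.add_mem _ ?_ ?_)
      · exact mul_mem_Gd hιx ih
      · exact Gd_mono (by omega) (mul_mem_Gd (hβ1 x) (zeta_mem_Gd w))
      · exact Gd_mono (by omega) (mul_mem_Gd (hβ1 x) ih)


/-- Minimal-length words in the support of a `σ`-weight vector have multidegree equal to the
weight. -/
lemma degw_eq_of_weight [Infinite K] (hσ2 : ∀ t i, σ t (ι K i) - (t i : K) • ι K i ∈ Gd 2)
    {u : FreeAlgebra K (Fin n)} {m : Fin n → ℤ}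
    (hu : ∀ t, σ t u = (chr m t : K) • u)
    {w0 : FreeMonoid (Fin n)} (hw0 : w0 ∈ (EE u).coeff.support)
    (hmin : ∀ w' ∈ (EE u).coeff.support, FreeMonoid.length w0 ≤ FreeMonoid.length w') :
    degw w0 = m := by
  classical
  by_contra hne
  obtain ⟨t, ht⟩ := chr_sep (K := K) hne
  have h1 : coord w0 (σ t u) = (chr (degw w0) t : K) * (EE u).coeff w0 := by
    conv_lhs => rw [expand (K := K) u, map_sum, map_sum]
    have hterm : ∀ w' ∈ (EE u).coeff.support,
        coord w0 (σ t (coord w' u • zeta w'))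
          = if w' = w0 then (chr (degw w0) t : K) * coord w' u else 0 := by
      intro w' hw'
      rw [map_smul, map_smul, smul_eq_mul]
      have hsplit : σ t (zeta w') = (chr (degw w') t : K) • zeta w'
          + (σ t (zeta w') - (chr (degw w') t : K) • zeta w') := by abel
      rw [hsplit, map_add, map_smul, coord_zeta,
        coord_eq_zero_of_Gd (sigma_zeta_Gd σ hσ2 t w')
          (Nat.lt_succ_of_le (hmin w' hw')), add_zero, smul_eq_mul]
      by_cases h : w' = w0
      · subst h; rw [if_pos rfl, if_pos rfl, mul_one, mul_comm]
      · rw [if_neg h, if_neg h, mul_zero, mul_zero]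
    rw [Finset.sum_congr rfl hterm, Finset.sum_ite_eq' _ w0 _, if_pos hw0, coord_apply]
  have h2 : coord w0 (σ t u) = (chr m t : K) * (EE u).coeff w0 := by
    rw [hu t, map_smul, smul_eq_mul, coord_apply]
  have hc0 : (EE u).coeff w0 ≠ 0 := Finsupp.mem_support_iff.1 hw0
  exact ht (Units.ext (mul_right_cancel₀ hc0 (h1.symm.trans h2)))

/-- An endomorphism fixing generators modulo length-`≥ 2` corrections is injective. -/
lemma beta_injective (β : FreeAlgebra K (Fin n) →ₐ[K] FreeAlgebra K (Fin n))
    (hβ1 : ∀ i, β (ι K i) - ι K i ∈ Gd 2) :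
    Function.Injective β := by
  classical
  rw [injective_iff_map_eq_zero]
  intro u hu
  by_contra hne
  have hsupp : (EE u).coeff.support.Nonempty := by
    rw [Finsupp.support_nonempty_iff]
    intro hc
    exact hne ((EmbeddingLike.map_eq_zero_iff (f := (EE (K := K)))).1 (MonoidAlgebra.coeff_eq_zero.1 hc))
  obtain ⟨w0, hw0, hmin⟩ := Finset.exists_min_image (EE u).coeff.support FreeMonoid.length hsupp
  have hco : coord w0 (β u) = (EE u).coeff w0 := by
    conv_lhs => rw [expand (K := K) u, map_sum, map_sum]
    have hterm : ∀ w' ∈ (EE u).coeff.support,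
        coord w0 (β (coord w' u • zeta w'))
          = if w' = w0 then coord w' u else 0 := by
      intro w' hw'
      rw [map_smul, map_smul, smul_eq_mul]
      have hsplit : β (zeta w') = zeta w' + (β (zeta w') - zeta w') := by abel
      rw [hsplit, map_add, coord_zeta,
        coord_eq_zero_of_Gd (beta_zeta_Gd β hβ1 w') (Nat.lt_succ_of_le (hmin w' hw')),
        add_zero]
      by_cases h : w' = w0
      · subst h; rw [if_pos rfl, if_pos rfl, mul_one]
      · rw [if_neg h, if_neg h, mul_zero]
    rw [Finset.sum_congr rfl hterm, Finset.sum_ite_eq' _ w0 _, if_pos hw0, coord_apply]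
  rw [hu, map_zero] at hco
  exact Finsupp.mem_support_iff.1 hw0 hco.symm

/-- The weight space of `σ` with weight (character) `m`. -/
def Wt (m : Fin n → ℤ) : Submodule K (FreeAlgebra K (Fin n)) where
  carrier := {u | ∀ t, σ t u = (chr m t : K) • u}
  add_mem' := by
    intro u v hu hv t
    rw [map_add, hu t, hv t, smul_add]
  zero_mem' := by intro t; rw [map_zero, smul_zero]
  smul_mem' := by
    intro c u hu t
    rw [map_smul, hu t, smul_comm]

lemma mem_Wt_iff {m : Fin n → ℤ} {u : FreeAlgebra K (Fin n)} :
    u ∈ Wt σ m ↔ ∀ t, σ t u = (chr m t : K) • u := ⟨fun h => h, fun h => h⟩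

lemma Wt_mul {m m' : Fin n → ℤ} {u v : FreeAlgebra K (Fin n)}
    (hu : u ∈ Wt σ m) (hv : v ∈ Wt σ m') : u * v ∈ Wt σ (m + m') := by
  rw [mem_Wt_iff] at hu hv ⊢
  intro t
  rw [map_mul, hu t, hv t, chr_add, Units.val_mul, smul_mul_assoc, mul_smul_comm, smul_smul]

lemma one_mem_Wt : (1 : FreeAlgebra K (Fin n)) ∈ Wt σ 0 := by
  rw [mem_Wt_iff]
  intro t
  rw [map_one, chr_zero, Units.val_one, one_smul]


lemma Sm_finite (m : Fin n → ℤ) : {w : FreeMonoid (Fin n) | degw w = m}.Finite := by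
  have hsub : {w : FreeMonoid (Fin n) | degw w = m}
      ⊆ FreeMonoid.toList ⁻¹' {l : List (Fin n) | l.length = (∑ j, m j).toNat} := by
    intro w hw
    simp only [Set.mem_preimage, Set.mem_setOf_eq]
    have h1 : (FreeMonoid.length w : ℤ) = ∑ j, m j := by
      rw [← sum_degw]
      exact Finset.sum_congr rfl fun j _ => congrFun hw.out j
    show FreeMonoid.length w = (∑ j, m j).toNat
    omega
  exact ((List.finite_length_eq (Fin n) _).preimage
    (FreeMonoid.toList.injective.injOn)).subset hsub

lemma sigma_beta_zeta (β : FreeAlgebra K (Fin n) →ₐ[K] FreeAlgebra K (Fin n))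
    (hβ2 : ∀ t i, σ t (β (ι K i)) = (t i : K) • β (ι K i))
    (t : Fin n → Kˣ) (w : FreeMonoid (Fin n)) :
    σ t (β (zeta w)) = (chr (degw w) t : K) • β (zeta w) := by
  induction w using FreeMonoid.recOn with
  | one => simp only [map_one, degw_one, chr_zero, Units.val_one, one_smul]
  | of_mul x w ih =>
      rw [map_mul, zeta_of, map_mul, map_mul, hβ2, ih, degw_mul, degw_of, chr_add, chr_eI,
        Units.val_mul, smul_mul_assoc, mul_smul_comm, smul_smul]

lemma Wt_le_range [Infinite K]
    (hσ2 : ∀ t i, σ t (ι K i) - (t i : K) • ι K i ∈ Gd 2)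
    (β : FreeAlgebra K (Fin n) →ₐ[K] FreeAlgebra K (Fin n))
    (hβ1 : ∀ i, β (ι K i) - ι K i ∈ Gd 2)
    (hβ2 : ∀ t i, σ t (β (ι K i)) = (t i : K) • β (ι K i))
    (m : Fin n → ℤ) :
    Wt σ m ≤ Subalgebra.toSubmodule β.range := by
  classical
  set S : Finset (FreeMonoid (Fin n)) := (Sm_finite (n := n) m).toFinset with hS
  have hmemS : ∀ w : FreeMonoid (Fin n), w ∈ S ↔ degw w = m := by
    intro w; rw [hS, Set.Finite.mem_toFinset]; exact Iff.rfl
  have hlenS : ∀ w : FreeMonoid (Fin n), w ∈ S → FreeMonoid.length w = (∑ j, m j).toNat := by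
    intro w hw
    have h1 : (FreeMonoid.length w : ℤ) = ∑ j, m j := by
      rw [← sum_degw]
      exact Finset.sum_congr rfl fun j _ => congrFun ((hmemS w).1 hw) j
    omega
  set Ψ : FreeAlgebra K (Fin n) →ₗ[K] (↥S → K) :=
    LinearMap.pi (fun w : ↥S => coord (w : FreeMonoid (Fin n))) with hΨ
  set Φ : ↥(Wt σ m) →ₗ[K] (↥S → K) := Ψ.comp (Wt σ m).subtype with hΦ
  have hΦinj : Function.Injective Φ := by
    intro u v huv
    rcases sub_eq_zero.2 huv.symm with _
    suffices h0 : ∀ u : ↥(Wt σ m), Φ u = 0 → u = 0 by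
      have := h0 (u - v) (by rw [map_sub, huv, sub_self])
      exact sub_eq_zero.1 (by exact_mod_cast this)
    intro u hu
    by_contra hne
    have hne' : (u : FreeAlgebra K (Fin n)) ≠ 0 := fun hc => hne (Subtype.ext hc)
    have hsupp : (EE (u : FreeAlgebra K (Fin n))).coeff.support.Nonempty := by
      rw [Finsupp.support_nonempty_iff]
      intro hc
      exact hne' ((EmbeddingLike.map_eq_zero_iff (f := (EE (K := K)))).1 (MonoidAlgebra.coeff_eq_zero.1 hc))
    obtain ⟨w0, hw0, hmin⟩ := Finset.exists_min_image _ FreeMonoid.length hsupp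
    have hdeg : degw w0 = m :=
      degw_eq_of_weight σ hσ2 ((mem_Wt_iff σ).1 u.2) hw0 hmin
    have hzero : Φ u ⟨w0, (hmemS w0).2 hdeg⟩ = 0 := by rw [hu]; rfl
    have : coord w0 (u : FreeAlgebra K (Fin n)) = 0 := hzero
    rw [coord_apply] at this
    exact Finsupp.mem_support_iff.1 hw0 this
  have hfd : FiniteDimensional K ↥(Wt σ m) := FiniteDimensional.of_injective Φ hΦinj
  have hrank_le : Module.finrank K ↥(Wt σ m) ≤ Fintype.card ↥S := by
    have := LinearMap.finrank_le_finrank_of_injective hΦinj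
    rwa [Module.finrank_fintype_fun_eq_card] at this
  have hvmem : ∀ w : ↥S, β (zeta (w : FreeMonoid (Fin n))) ∈ Wt σ m := by
    intro w
    rw [mem_Wt_iff]
    intro t
    rw [sigma_beta_zeta σ β hβ2 t, (hmemS _).1 w.2]
  set v : ↥S → ↥(Wt σ m) := fun w => ⟨β (zeta (w : FreeMonoid (Fin n))), hvmem w⟩ with hv
  have hΨv : ∀ w : ↥S, Ψ (β (zeta (w : FreeMonoid (Fin n)))) = Pi.single w 1 := by
    intro w
    funext w'
    have hsplit : β (zeta (w : FreeMonoid (Fin n)))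
        = zeta (w : FreeMonoid (Fin n))
          + (β (zeta (w : FreeMonoid (Fin n))) - zeta (w : FreeMonoid (Fin n))) := by abel
    have hlt : FreeMonoid.length (w' : FreeMonoid (Fin n))
        < FreeMonoid.length (w : FreeMonoid (Fin n)) + 1 := by
      rw [hlenS _ w.2, hlenS _ w'.2]
      omega
    show coord (w' : FreeMonoid (Fin n)) (β (zeta (w : FreeMonoid (Fin n)))) = _
    rw [hsplit, map_add, coord_zeta,
      coord_eq_zero_of_Gd (beta_zeta_Gd β hβ1 (w : FreeMonoid (Fin n))) hlt, add_zero,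
      Pi.single_apply]
    by_cases h : w' = w
    · rw [if_pos (congrArg _ h.symm), if_pos h]
    · rw [if_neg (fun hc => h (Subtype.ext hc.symm)), if_neg h]
  have hind : LinearIndependent K v := by
    have h1 : LinearIndependent K (fun w : ↥S => Pi.single w (1 : K)) := by
      have := (Pi.basisFun K ↥S).linearIndependent
      convert this using 1
      funext w
      rw [Pi.basisFun_apply]
    have h2 : LinearIndependent K (Ψ ∘ fun w : ↥S => (v w : FreeAlgebra K (Fin n))) := by
      have : (Ψ ∘ fun w : ↥S => (v w : FreeAlgebra K (Fin n)))
          = fun w : ↥S => Pi.single w (1 : K) := by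
        funext w
        exact hΨv w
      rw [this]
      exact h1
    have h3 : LinearIndependent K (fun w : ↥S => (v w : FreeAlgebra K (Fin n))) :=
      LinearIndependent.of_comp Ψ h2
    exact h3.of_comp ((Wt σ m).subtype)
  have hcard_le : Fintype.card ↥S ≤ Module.finrank K ↥(Wt σ m) :=
    hind.fintype_card_le_finrank
  have hspan : Submodule.span K (Set.range v) = ⊤ :=
    hind.span_eq_top_of_card_eq_finrank' (le_antisymm hcard_le hrank_le)
  intro u hu
  have hmem : u ∈ Submodule.map (Wt σ m).subtype (Submodule.span K (Set.range v)) :=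
    ⟨⟨u, hu⟩, by rw [hspan]; exact Submodule.mem_top, rfl⟩
  rw [Submodule.map_span] at hmem
  have hsub : ((Wt σ m).subtype '' Set.range v)
      ⊆ (Subalgebra.toSubmodule β.range : Set (FreeAlgebra K (Fin n))) := by
    rintro x ⟨y, ⟨w, rfl⟩, rfl⟩
    exact ⟨zeta (w : FreeMonoid (Fin n)), rfl⟩
  exact Submodule.span_le.2 hsub hmem


lemma mul_mem_iSup_Wt {a b : FreeAlgebra K (Fin n)}
    (ha : a ∈ ⨆ m : Fin n → ℤ, Wt σ m) (hb : b ∈ ⨆ m : Fin n → ℤ, Wt σ m) :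
    a * b ∈ ⨆ m : Fin n → ℤ, Wt σ m := by
  refine Submodule.iSup_induction (motive := fun a => a * b ∈ ⨆ m : Fin n → ℤ, Wt σ m) _ ha ?_ ?_ ?_
  · intro m x hx
    refine Submodule.iSup_induction
      (motive := fun b => x * b ∈ ⨆ m' : Fin n → ℤ, Wt σ m') _ hb ?_ ?_ ?_
    · intro m' y hy
      exact le_iSup (fun k : Fin n → ℤ => Wt σ k) (m + m') (Wt_mul σ hx hy)
    · show x * 0 ∈ _
      rw [mul_zero]; exact Submodule.zero_mem _
    · intro y z hy hz
      show x * (y + z) ∈ _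
      rw [mul_add]; exact Submodule.add_mem _ hy hz
  · show 0 * b ∈ _
    rw [zero_mul]; exact Submodule.zero_mem _
  · intro x y hx hy
    show (x + y) * b ∈ _
    rw [add_mul]; exact Submodule.add_mem _ hx hy

lemma iSup_Wt_eq_top (hz : ∀ i, ι K i ∈ ⨆ m : Fin n → ℤ, Wt σ m) :
    (⨆ m : Fin n → ℤ, Wt σ m) = ⊤ := by
  rw [eq_top_iff]
  rintro u -
  induction u using FreeAlgebra.induction with
  | grade0 r =>
      have h1 : (1 : FreeAlgebra K (Fin n)) ∈ ⨆ m : Fin n → ℤ, Wt σ m :=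
        le_iSup (fun m : Fin n → ℤ => Wt σ m) 0 (one_mem_Wt σ)
      have h2 := Submodule.smul_mem _ r h1
      rwa [Algebra.algebraMap_eq_smul_one]
  | grade1 x => exact hz x
  | mul a b ha hb => exact mul_mem_iSup_Wt σ ha hb
  | add a b ha hb => exact Submodule.add_mem _ ha hb

end Action

end TorusProofAux

open TorusProofAux

/-- If an effective regular action `σ` of the `n`-torus on the free algebra lifts the standard
torus action on the polynomial algebra (i.e. `σ(t)(z_i) − t_i • z_i` lies in the commutator
ideal for all `t, i`), then `σ` is conjugate to the standard action:  there is an algebra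
automorphism `β` with `(β⁻¹ ∘ σ(t) ∘ β)(z_i) = t_i • z_i` for all `t` and `i`. -/
theorem lift_of_standard_torus_action_is_standard
    {K : Type} [Field K] [IsAlgClosed K] {n : ℕ} (hn : 1 ≤ n)
    (σ : (Fin n → Kˣ) →* (FreeAlgebra K (Fin n) ≃ₐ[K] FreeAlgebra K (Fin n)))
    (hreg : TorusActionIsRegular σ)
    (heff : Function.Injective σ)
    (hlift : ∀ (t : Fin n → Kˣ) (i : Fin n),
      σ t (ι K i) - ((t i : K) • ι K i) ∈ RingHom.ker (abelianization K n).toRingHom) :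
    ∃ β : FreeAlgebra K (Fin n) ≃ₐ[K] FreeAlgebra K (Fin n),
      ∀ (t : Fin n → Kˣ) (i : Fin n),
        β.symm (σ t (β (ι K i))) = (t i : K) • ι K i := by
  classical
  -- the corrections lie in `Gd 2`
  have hker : ∀ (t : Fin n → Kˣ) (i : Fin n),
      abelianization K n (σ t (ι K i) - (t i : K) • ι K i) = 0 := by
    intro t i
    exact RingHom.mem_ker.1 (hlift t i)
  have hσ2 : ∀ (t : Fin n → Kˣ) (i : Fin n),
      σ t (ι K i) - (t i : K) • ι K i ∈ Gd 2 := by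
    intro t i
    rw [mem_Gd_iff]
    exact ker_eps_mem_Gd2 (hker t i)
  -- the regular expansion
  choose a ha using hreg
  have ha' : ∀ (i : Fin n) (t : Fin n → Kˣ),
      σ t (ι K i) = ∑ m ∈ (a i).support, (chr m t : K) • a i m := by
    intro i t
    exact ha i t
  -- each coefficient is a weight vector
  have h1 : ∀ (i : Fin n) (m : Fin n → ℤ) (s : Fin n → Kˣ),
      σ s (a i m) = (chr m s : K) • a i m := by
    intro i m s
    by_cases hm : m ∈ (a i).support
    · have hx : ∀ t : Fin n → Kˣ, ∑ m ∈ (a i).support,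
          (chr m t : K) • (σ s (a i m) - (chr m s : K) • a i m) = 0 := by
        intro t
        have e1 : σ s (σ t (ι K i)) = ∑ m ∈ (a i).support, (chr m t : K) • σ s (a i m) := by
          rw [ha' i t, map_sum]
          exact Finset.sum_congr rfl fun m _ => map_smul _ _ _
        have e2 : σ s (σ t (ι K i))
            = ∑ m ∈ (a i).support, (chr m t : K) • ((chr m s : K) • a i m) := by
          rw [← AlgEquiv.mul_apply, ← map_mul σ, ha' i (s * t)]
          refine Finset.sum_congr rfl fun m _ => ?_
          rw [chr_map_mul, Units.val_mul, smul_smul,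
            mul_comm ((chr m s : K)) ((chr m t : K))]
        calc ∑ m ∈ (a i).support, (chr m t : K) • (σ s (a i m) - (chr m s : K) • a i m)
            = (∑ m ∈ (a i).support, (chr m t : K) • σ s (a i m))
              - ∑ m ∈ (a i).support, (chr m t : K) • ((chr m s : K) • a i m) := by
              rw [← Finset.sum_sub_distrib]
              exact Finset.sum_congr rfl fun m _ => smul_sub _ _ _
          _ = 0 := by rw [← e1, ← e2, sub_self]
      have := char_ext (a i).support _ hx m hm
      exact sub_eq_zero.1 this
    · rw [Finsupp.notMem_support_iff.1 hm, map_zero, smul_zero]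
  -- abelianized coefficients
  have h2 : ∀ (i : Fin n) (m : Fin n → ℤ),
      abelianization K n (a i m) = if m = eI i then MvPolynomial.X i else 0 := by
    intro i
    set S : Finset (Fin n → ℤ) := insert (eI i) (a i).support with hSdef
    have hx : ∀ t : Fin n → Kˣ, ∑ m ∈ S, (chr m t : K) •
        (abelianization K n (a i m) - (if m = eI i then MvPolynomial.X i else 0)) = 0 := by
      intro t
      have hA : ∑ m ∈ S, (chr m t : K) • abelianization K n (a i m)
          = abelianization K n (σ t (ι K i)) := by
        rw [ha' i t, map_sum]
        have hms : ∑ m ∈ (a i).support, abelianization K n ((chr m t : K) • a i m)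
            = ∑ m ∈ (a i).support, (chr m t : K) • abelianization K n (a i m) :=
          Finset.sum_congr rfl fun m _ => map_smul _ _ _
        rw [hms]
        have hzero : ∀ m ∈ S, m ∉ (a i).support →
            (chr m t : K) • abelianization K n (a i m) = 0 := fun m _ hm => by
          simp [Finsupp.notMem_support_iff.1 hm]
        exact (Finset.sum_subset (Finset.subset_insert (eI i) (a i).support) hzero).symm
      have hB : ∑ m ∈ S, (chr m t : K) •
            (if m = eI i then MvPolynomial.X i else (0 : MvPolynomial (Fin n) K))
          = (t i : K) • MvPolynomial.X i := by
        have : ∀ m ∈ S, (chr m t : K) •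
              (if m = eI i then MvPolynomial.X i else (0 : MvPolynomial (Fin n) K))
            = if m = eI i then (chr m t : K) • MvPolynomial.X i else 0 := by
          intro m _
          by_cases h : m = eI i
          · rw [if_pos h, if_pos h]
          · rw [if_neg h, if_neg h, smul_zero]
        rw [Finset.sum_congr rfl this, Finset.sum_ite_eq' S (eI i) _,
          if_pos (Finset.mem_insert_self _ _), chr_eI]
      have hC : abelianization K n (σ t (ι K i)) = (t i : K) • MvPolynomial.X i := by
        have hk := hker t i
        rw [map_sub, map_smul, abelianization_ι, sub_eq_zero] at hk
        exact hk
      calc ∑ m ∈ S, (chr m t : K) •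
            (abelianization K n (a i m) - (if m = eI i then MvPolynomial.X i else 0))
          = (∑ m ∈ S, (chr m t : K) • abelianization K n (a i m))
            - ∑ m ∈ S, (chr m t : K) • (if m = eI i then MvPolynomial.X i else 0) := by
            rw [← Finset.sum_sub_distrib]
            exact Finset.sum_congr rfl fun m _ => smul_sub _ _ _
        _ = 0 := by rw [hA, hB, hC, sub_self]
    intro m
    by_cases hm : m ∈ S
    · exact sub_eq_zero.1 (char_ext S _ hx m hm)
    · have hm1 : m ∉ (a i).support := fun hc => hm (Finset.mem_insert_of_mem hc)
      have hm2 : m ≠ eI i := fun hc => hm (hc ▸ Finset.mem_insert_self _ _)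
      rw [Finsupp.notMem_support_iff.1 hm1, map_zero, if_neg hm2]
  -- decomposition of the generators
  have h3 : ∀ i : Fin n, ι K i = ∑ m ∈ (a i).support, a i m := by
    intro i
    have h := ha' i 1
    rw [map_one] at h
    simpa [chr_map_one] using h
  -- the new generators
  set W : Fin n → FreeAlgebra K (Fin n) := fun i => a i (eI i) with hWdef
  have hWeps : ∀ i, abelianization K n (W i) = MvPolynomial.X i := by
    intro i
    show abelianization K n (a i (eI i)) = _
    rw [h2 i (eI i), if_pos rfl]
  have hWsup : ∀ i, eI i ∈ (a i).support := by
    intro i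
    by_contra hc
    have : W i = 0 := Finsupp.notMem_support_iff.1 hc
    have h0 := hWeps i
    rw [this, map_zero] at h0
    exact MvPolynomial.X_ne_zero i h0.symm
  have hWG : ∀ i, W i - ι K i ∈ Gd 2 := by
    intro i
    have hsplit : W i - ι K i = -∑ m ∈ (a i).support.erase (eI i), a i m := by
      rw [h3 i, ← Finset.add_sum_erase _ _ (hWsup i)]
      abel
    rw [hsplit]
    refine Submodule.neg_mem _ (Submodule.sum_mem _ fun m hm => ?_)
    rw [mem_Gd_iff]
    refine ker_eps_mem_Gd2 ?_
    rw [h2 i m, if_neg (Finset.ne_of_mem_erase hm)]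
  have hWweight : ∀ (t : Fin n → Kˣ) (i : Fin n), σ t (W i) = (t i : K) • W i := by
    intro t i
    show σ t (a i (eI i)) = (t i : K) • a i (eI i)
    rw [h1 i (eI i) t, chr_eI]
  -- the conjugating homomorphism
  set B : FreeAlgebra K (Fin n) →ₐ[K] FreeAlgebra K (Fin n) := FreeAlgebra.lift K W with hBdef
  have hB : ∀ i, B (ι K i) = W i := by
    intro i
    rw [hBdef]
    exact FreeAlgebra.lift_ι_apply _ _
  have hβ1 : ∀ i, B (ι K i) - ι K i ∈ Gd 2 := by
    intro i; rw [hB i]; exact hWG i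
  have hβ2 : ∀ (t : Fin n → Kˣ) (i : Fin n), σ t (B (ι K i)) = (t i : K) • B (ι K i) := by
    intro t i; rw [hB i]; exact hWweight t i
  have hinj : Function.Injective B := beta_injective B hβ1
  have hz : ∀ i, ι K i ∈ ⨆ m : Fin n → ℤ, Wt σ m := by
    intro i
    rw [h3 i]
    refine Submodule.sum_mem _ fun m _ => ?_
    exact le_iSup (fun k : Fin n → ℤ => Wt σ k) m ((mem_Wt_iff σ).2 fun t => h1 i m t)
  have hsurj : Function.Surjective B := by
    intro u
    have hT : u ∈ ⨆ m : Fin n → ℤ, Wt σ m := by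
      rw [iSup_Wt_eq_top σ hz]; trivial
    have hle : (⨆ m : Fin n → ℤ, Wt σ m) ≤ Subalgebra.toSubmodule B.range :=
      iSup_le fun m => Wt_le_range σ hσ2 B hβ1 hβ2 m
    exact (AlgHom.mem_range _).1 ((Subalgebra.mem_toSubmodule _).1 (hle hT))
  set βeq : FreeAlgebra K (Fin n) ≃ₐ[K] FreeAlgebra K (Fin n) :=
    AlgEquiv.ofBijective B ⟨hinj, hsurj⟩ with hβeqdef
  have hβeq : ∀ i, βeq (ι K i) = W i := fun i => hB i
  refine ⟨βeq, fun t i => ?_⟩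
  have hsymm : βeq.symm (W i) = ι K i := by
    rw [← hβeq i, AlgEquiv.symm_apply_apply]
  rw [hβeq i, hWweight t i, map_smul, hsymm]
end

section
/- Let K be a field, n, N ≥ 1, and let φ be a K-algebra endomorphism of F_n = FreeAlgebra K (Fin n) that admits a test algebra: there is a K-subalgebra P of the matrix algebra M_N(K) = Matrix (Fin N) (Fin N) K and a tuple p : Fin n → M_N(K) with p_i ∉ P for some i, such that ev_p(φ(z_j)) ∈ P for every j, where ev_p : F_n →ₐ[K] M_N(K) is the K-algebra homomorphism determined by z_j ↦ p_j. Then φ is not an automorphism of F_n (φ is not bijective). -/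
open FreeAlgebra

/-- If an endomorphism `φ` of the free algebra admits a *test algebra* — a subalgebra `P` of a
matrix algebra `M_N(K)` together with a point `p ∈ M_N(K)^n` not all of whose coordinates lie
in `P`, yet the induced polynomial map sends `p` into `P^n` — then `φ` is not an automorphism. -/
theorem test_algebra_implies_not_automorphism
    {K : Type} [Field K] {n N : ℕ} (hn : 1 ≤ n) (hN : 1 ≤ N)
    (φ : FreeAlgebra K (Fin n) →ₐ[K] FreeAlgebra K (Fin n))
    (P : Subalgebra K (Matrix (Fin N) (Fin N) K))
    (p : Fin n → Matrix (Fin N) (Fin N) K)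
    (hp : ∃ i : Fin n, p i ∉ P)
    (htest : ∀ j : Fin n, FreeAlgebra.lift K p (φ (ι K j)) ∈ P) :
    ¬ Function.Bijective φ := by
  intro hbij
  obtain ⟨i, hi⟩ := hp
  apply hi
  have key : ∀ x, (FreeAlgebra.lift K p) (φ x) ∈ P := by
    intro x
    induction x using FreeAlgebra.induction with
    | grade0 r => simp [Subalgebra.algebraMap_mem]
    | grade1 j => exact htest j
    | mul a b ha hb => simp only [map_mul]; exact P.mul_mem ha hb
    | add a b ha hb => simp only [map_add]; exact P.add_mem ha hb
  obtain ⟨y, hy⟩ := hbij.2 (ι K i)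
  have := key y
  rw [hy] at this
  simpa using this
end

section
/- Let K be a field, n, m ≥ 1, A = FreeAlgebra K (Fin n ⊕ Fin m) with generators x_i = ι(inl i) (i = 1,…,n) and y_j = ι(inr j) (j = 1,…,m), and let C be an associative unital K-algebra. Let α, γ : A →ₐ[K] C be surjective K-algebra homomorphisms with α(y_j) = 0 for all j and γ(x_i) = 0 for all i. Then there exist elements g_1,…,g_n in the K-subalgebra of A generated by y_1,…,y_m and f_1,…,f_m in the K-subalgebra of A generated by x_1,…,x_n such that α(x_i) = γ(g_i) and α(f_j) = γ(y_j) for all i, j, and there exists a K-algebra automorphism τ of A with τ(x_i) = x_i + g_i for all i and α = γ ∘ τ. In particular α is equivalent to γ. -/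
open FreeAlgebra

section Aux

variable {K : Type} [Field K] {n m : ℕ} {C : Type} [Ring C] [Algebra K C]

/-- An algebra hom of the free algebra fixing a set pointwise fixes the adjoin. -/
theorem fix_adjoin {A : Type} [Ring A] [Algebra K A] (φ : A →ₐ[K] A)
    (s : Set A) (hs : ∀ x ∈ s, φ x = x) : ∀ b ∈ Algebra.adjoin K s, φ b = b := by
  intro b hb
  induction hb using Algebra.adjoin_induction with
  | mem x hx => exact hs x hx
  | algebraMap r => exact φ.commutes r
  | add x y hx hy px py => simp [map_add, px, py]
  | mul x y hx hy px py => simp [map_mul, px, py]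

end Aux

/-- Asanuma-type lemma (free associative version): if `α, γ : K⟨x₁,…,xₙ,y₁,…,y_m⟩ → C` are
surjective algebra homomorphisms with `α(y_j) = 0` and `γ(x_i) = 0`, then there exist
`g_i ∈ K⟨y₁,…,y_m⟩` and `f_j ∈ K⟨x₁,…,xₙ⟩` with `α(x_i) = γ(g_i)`, `α(f_j) = γ(y_j)`, and an
automorphism `τ` with `τ(x_i) = x_i + g_i` and `α = γ ∘ τ`; in particular `α` is equivalent
to `γ`. -/
theorem surjective_homs_equivalent
    {K : Type} [Field K] {n m : ℕ} (hn : 1 ≤ n) (hm : 1 ≤ m)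
    {C : Type} [Ring C] [Algebra K C]
    (α γ : FreeAlgebra K (Fin n ⊕ Fin m) →ₐ[K] C)
    (hα : Function.Surjective α) (hγ : Function.Surjective γ)
    (hαy : ∀ j : Fin m, α (ι K (Sum.inr j)) = 0)
    (hγx : ∀ i : Fin n, γ (ι K (Sum.inl i)) = 0) :
    ∃ (g : Fin n → FreeAlgebra K (Fin n ⊕ Fin m))
      (f : Fin m → FreeAlgebra K (Fin n ⊕ Fin m)),
      (∀ i : Fin n, g i ∈ Algebra.adjoin K
        (Set.range fun j : Fin m => (ι K (Sum.inr j) : FreeAlgebra K (Fin n ⊕ Fin m)))) ∧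
      (∀ j : Fin m, f j ∈ Algebra.adjoin K
        (Set.range fun i : Fin n => (ι K (Sum.inl i) : FreeAlgebra K (Fin n ⊕ Fin m)))) ∧
      (∀ i : Fin n, α (ι K (Sum.inl i)) = γ (g i)) ∧
      (∀ j : Fin m, α (f j) = γ (ι K (Sum.inr j))) ∧
      ∃ τ : FreeAlgebra K (Fin n ⊕ Fin m) ≃ₐ[K] FreeAlgebra K (Fin n ⊕ Fin m),
        (∀ i : Fin n, τ (ι K (Sum.inl i)) = ι K (Sum.inl i) + g i) ∧
        (∀ a : FreeAlgebra K (Fin n ⊕ Fin m), α a = γ (τ a)) := by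
  classical
  set A := FreeAlgebra K (Fin n ⊕ Fin m) with hA
  set X : Fin n → A := fun i => ι K (Sum.inl i) with hXdef
  set Y : Fin m → A := fun j => ι K (Sum.inr j) with hYdef
  set SY := Algebra.adjoin K (Set.range Y) with hSY
  set SX := Algebra.adjoin K (Set.range X) with hSX
  -- any value of γ is attained on SY
  have hYsurj : ∀ a : A, ∃ b ∈ SY, γ b = γ a := by
    intro a
    induction a using FreeAlgebra.induction with
    | grade0 r => exact ⟨algebraMap K A r, Subalgebra.algebraMap_mem _ r, rfl⟩
    | grade1 v =>
      rcases v with i | j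
      · exact ⟨0, Subalgebra.zero_mem _, by simp [hγx i]⟩
      · exact ⟨Y j, Algebra.subset_adjoin ⟨j, rfl⟩, rfl⟩
    | mul a b ha hb =>
      obtain ⟨a', ha', h1⟩ := ha
      obtain ⟨b', hb', h2⟩ := hb
      exact ⟨a' * b', mul_mem ha' hb', by simp [map_mul, h1, h2]⟩
    | add a b ha hb =>
      obtain ⟨a', ha', h1⟩ := ha
      obtain ⟨b', hb', h2⟩ := hb
      exact ⟨a' + b', add_mem ha' hb', by simp [map_add, h1, h2]⟩
  have hXsurj : ∀ a : A, ∃ b ∈ SX, α b = α a := by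
    intro a
    induction a using FreeAlgebra.induction with
    | grade0 r => exact ⟨algebraMap K A r, Subalgebra.algebraMap_mem _ r, rfl⟩
    | grade1 v =>
      rcases v with i | j
      · exact ⟨X i, Algebra.subset_adjoin ⟨i, rfl⟩, rfl⟩
      · exact ⟨0, Subalgebra.zero_mem _, by simp [hαy j]⟩
    | mul a b ha hb =>
      obtain ⟨a', ha', h1⟩ := ha
      obtain ⟨b', hb', h2⟩ := hb
      exact ⟨a' * b', mul_mem ha' hb', by simp [map_mul, h1, h2]⟩
    | add a b ha hb =>
      obtain ⟨a', ha', h1⟩ := ha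
      obtain ⟨b', hb', h2⟩ := hb
      exact ⟨a' + b', add_mem ha' hb', by simp [map_add, h1, h2]⟩
  -- choose g
  have hg : ∀ i : Fin n, ∃ b ∈ SY, γ b = α (X i) := by
    intro i
    obtain ⟨a, ha⟩ := hγ (α (X i))
    obtain ⟨b, hb, hb'⟩ := hYsurj a
    exact ⟨b, hb, by rw [hb', ha]⟩
  choose g hgmem hgval using hg
  -- choose f
  have hf : ∀ j : Fin m, ∃ b ∈ SX, α b = γ (Y j) := by
    intro j
    obtain ⟨a, ha⟩ := hα (γ (Y j))
    obtain ⟨b, hb, hb'⟩ := hXsurj a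
    exact ⟨b, hb, by rw [hb', ha]⟩
  choose f hfmem hfval using hf
  -- automorphism σ1 : x ↦ x + g, y ↦ y
  let σ1 : A →ₐ[K] A := lift K (Sum.elim (fun i => X i + g i) Y)
  let σ1' : A →ₐ[K] A := lift K (Sum.elim (fun i => X i - g i) Y)
  have σ1Y : ∀ j, σ1 (Y j) = Y j := fun j => lift_ι_apply _ _
  have σ1'Y : ∀ j, σ1' (Y j) = Y j := fun j => lift_ι_apply _ _
  have σ1X : ∀ i, σ1 (X i) = X i + g i := fun i => lift_ι_apply _ _
  have σ1'X : ∀ i, σ1' (X i) = X i - g i := fun i => lift_ι_apply _ _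
  have σ1g : ∀ i, σ1 (g i) = g i := by
    intro i
    refine fix_adjoin σ1 _ ?_ _ (hgmem i)
    rintro x ⟨j, rfl⟩; exact σ1Y j
  have σ1'g : ∀ i, σ1' (g i) = g i := by
    intro i
    refine fix_adjoin σ1' _ ?_ _ (hgmem i)
    rintro x ⟨j, rfl⟩; exact σ1'Y j
  have e1 : σ1.comp σ1' = AlgHom.id K A := by
    apply FreeAlgebra.hom_ext
    funext v
    rcases v with i | j
    · show σ1 (σ1' (X i)) = X i
      rw [σ1'X, map_sub, σ1X, σ1g]; abel
    · show σ1 (σ1' (Y j)) = Y j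
      rw [σ1'Y, σ1Y]
  have e1' : σ1'.comp σ1 = AlgHom.id K A := by
    apply FreeAlgebra.hom_ext
    funext v
    rcases v with i | j
    · show σ1' (σ1 (X i)) = X i
      rw [σ1X, map_add, σ1'X, σ1'g]; abel
    · show σ1' (σ1 (Y j)) = Y j
      rw [σ1Y, σ1'Y]
  -- automorphism σ2 : x ↦ x, y ↦ y - f
  let σ2 : A →ₐ[K] A := lift K (Sum.elim X (fun j => Y j - f j))
  let σ2' : A →ₐ[K] A := lift K (Sum.elim X (fun j => Y j + f j))
  have σ2X : ∀ i, σ2 (X i) = X i := fun i => lift_ι_apply _ _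
  have σ2'X : ∀ i, σ2' (X i) = X i := fun i => lift_ι_apply _ _
  have σ2Y : ∀ j, σ2 (Y j) = Y j - f j := fun j => lift_ι_apply _ _
  have σ2'Y : ∀ j, σ2' (Y j) = Y j + f j := fun j => lift_ι_apply _ _
  have σ2f : ∀ j, σ2 (f j) = f j := by
    intro j
    refine fix_adjoin σ2 _ ?_ _ (hfmem j)
    rintro x ⟨i, rfl⟩; exact σ2X i
  have σ2'f : ∀ j, σ2' (f j) = f j := by
    intro j
    refine fix_adjoin σ2' _ ?_ _ (hfmem j)
    rintro x ⟨i, rfl⟩; exact σ2'X i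
  have e2 : σ2.comp σ2' = AlgHom.id K A := by
    apply FreeAlgebra.hom_ext
    funext v
    rcases v with i | j
    · show σ2 (σ2' (X i)) = X i
      rw [σ2'X, σ2X]
    · show σ2 (σ2' (Y j)) = Y j
      rw [σ2'Y, map_add, σ2Y, σ2f]; abel
  have e2' : σ2'.comp σ2 = AlgHom.id K A := by
    apply FreeAlgebra.hom_ext
    funext v
    rcases v with i | j
    · show σ2' (σ2 (X i)) = X i
      rw [σ2X, σ2'X]
    · show σ2' (σ2 (Y j)) = Y j
      rw [σ2Y, map_sub, σ2'Y, σ2'f]; abel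
  let E1 : A ≃ₐ[K] A := AlgEquiv.ofAlgHom σ1 σ1' e1 e1'
  let E2 : A ≃ₐ[K] A := AlgEquiv.ofAlgHom σ2 σ2' e2 e2'
  let τ : A ≃ₐ[K] A := E2.trans E1
  have hτ : ∀ a : A, τ a = σ1 (σ2 a) := fun a => rfl
  -- γ ∘ σ1 agrees with α on SX
  have hcompat : ∀ b ∈ SX, γ (σ1 b) = α b := by
    intro b hb
    induction hb using Algebra.adjoin_induction with
    | mem x hx =>
      obtain ⟨i, rfl⟩ := hx
      rw [σ1X, map_add, hγx i, zero_add, hgval i]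
    | algebraMap r =>
      simp only [σ1.commutes r]
      exact (γ.commutes r).trans (α.commutes r).symm
    | add x y hx hy px py => simp [map_add, px, py]
    | mul x y hx hy px py => simp [map_mul, px, py]
  refine ⟨g, f, hgmem, hfmem, fun i => (hgval i).symm, hfval, τ, ?_, ?_⟩
  · intro i
    rw [hτ, σ2X, σ1X]
  · -- α = γ ∘ τ
    have : γ.comp (σ1.comp σ2) = α := by
      apply FreeAlgebra.hom_ext
      funext v
      rcases v with i | j
      · show γ (σ1 (σ2 (X i))) = α (X i)
        rw [σ2X, σ1X, map_add, hγx i, zero_add, hgval i]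
      · show γ (σ1 (σ2 (Y j))) = α (Y j)
        rw [σ2Y, map_sub, σ1Y, map_sub, hcompat (f j) (hfmem j), hfval j, hαy j]
        abel
    intro a
    rw [hτ]
    exact (DFunLike.congr_fun this a).symm
end

section
/- Let K be a field, n, m ≥ 1, A = FreeAlgebra K (Fin n ⊕ Fin m) with generators x_i = ι(inl i) and y_j = ι(inr j), and let C be an associative unital K-algebra that is generated as a K-algebra by some family of m elements. Let α, β : A →ₐ[K] C be surjective K-algebra homomorphisms with α(y_j) = β(y_j) = 0 for all j. Then α is equivalent to β: there exists a K-algebra automorphism τ of A with α = β ∘ τ. -/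
open FreeAlgebra

private noncomputable def PhiX (K : Type) [Field K] (n m : ℕ) :
    FreeAlgebra K (Fin n) →ₐ[K] FreeAlgebra K (Fin n ⊕ Fin m) :=
  FreeAlgebra.lift K fun i => ι K (Sum.inl i)

private noncomputable def PhiY (K : Type) [Field K] (n m : ℕ) :
    FreeAlgebra K (Fin m) →ₐ[K] FreeAlgebra K (Fin n ⊕ Fin m) :=
  FreeAlgebra.lift K fun j => ι K (Sum.inr j)

@[simp] private lemma PhiX_ι {K : Type} [Field K] {n m : ℕ} (i : Fin n) :
    PhiX K n m (ι K i) = ι K (Sum.inl i) := by simp [PhiX]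

@[simp] private lemma PhiY_ι {K : Type} [Field K] {n m : ℕ} (j : Fin m) :
    PhiY K n m (ι K j) = ι K (Sum.inr j) := by simp [PhiY]

/-- if a hom fixes all the x-generators, it fixes the image of `PhiX`. -/
private lemma fix_PhiX {K : Type} [Field K] {n m : ℕ}
    (σ : FreeAlgebra K (Fin n ⊕ Fin m) →ₐ[K] FreeAlgebra K (Fin n ⊕ Fin m))
    (h : ∀ i, σ (ι K (Sum.inl i)) = ι K (Sum.inl i)) :
    σ.comp (PhiX K n m) = PhiX K n m := by
  apply FreeAlgebra.hom_ext
  funext i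
  simp [h i]

private lemma fix_PhiY {K : Type} [Field K] {n m : ℕ}
    (σ : FreeAlgebra K (Fin n ⊕ Fin m) →ₐ[K] FreeAlgebra K (Fin n ⊕ Fin m))
    (h : ∀ j, σ (ι K (Sum.inr j)) = ι K (Sum.inr j)) :
    σ.comp (PhiY K n m) = PhiY K n m := by
  apply FreeAlgebra.hom_ext
  funext j
  simp [h j]

/-- elementary automorphism shifting the `y`-generators by polynomials in the `x`-generators. -/
private noncomputable def elemY {K : Type} [Field K] {n m : ℕ} (r : Fin m → FreeAlgebra K (Fin n)) :
    FreeAlgebra K (Fin n ⊕ Fin m) ≃ₐ[K] FreeAlgebra K (Fin n ⊕ Fin m) :=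
  AlgEquiv.ofAlgHom
    (FreeAlgebra.lift K (Sum.elim (fun i => ι K (Sum.inl i))
      (fun j => ι K (Sum.inr j) + PhiX K n m (r j))))
    (FreeAlgebra.lift K (Sum.elim (fun i => ι K (Sum.inl i))
      (fun j => ι K (Sum.inr j) - PhiX K n m (r j))))
    (by
      apply FreeAlgebra.hom_ext
      funext g
      rcases g with i | j
      · simp
      · have h1 := fix_PhiX (FreeAlgebra.lift K (Sum.elim (fun i => ι K (Sum.inl i))
          (fun j => ι K (Sum.inr j) + PhiX K n m (r j)))) (fun i => by simp)
        have h2 := DFunLike.congr_fun h1 (r j)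
        simp only [AlgHom.comp_apply] at h2
        simp [h2])
    (by
      apply FreeAlgebra.hom_ext
      funext g
      rcases g with i | j
      · simp
      · have h1 := fix_PhiX (FreeAlgebra.lift K (Sum.elim (fun i => ι K (Sum.inl i))
          (fun j => ι K (Sum.inr j) - PhiX K n m (r j)))) (fun i => by simp)
        have h2 := DFunLike.congr_fun h1 (r j)
        simp only [AlgHom.comp_apply] at h2
        simp [h2])

@[simp] private lemma elemY_inl {K : Type} [Field K] {n m : ℕ}
    (r : Fin m → FreeAlgebra K (Fin n)) (i : Fin n) :
    elemY r (ι K (Sum.inl i)) = ι K (Sum.inl i) := by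
  simp [elemY]

@[simp] private lemma elemY_inr {K : Type} [Field K] {n m : ℕ}
    (r : Fin m → FreeAlgebra K (Fin n)) (j : Fin m) :
    elemY r (ι K (Sum.inr j)) = ι K (Sum.inr j) + PhiX K n m (r j) := by
  simp [elemY]

/-- elementary automorphism shifting the `x`-generators by polynomials in the `y`-generators. -/
private noncomputable def elemX {K : Type} [Field K] {n m : ℕ} (f : Fin n → FreeAlgebra K (Fin m)) :
    FreeAlgebra K (Fin n ⊕ Fin m) ≃ₐ[K] FreeAlgebra K (Fin n ⊕ Fin m) :=
  AlgEquiv.ofAlgHom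
    (FreeAlgebra.lift K (Sum.elim (fun i => ι K (Sum.inl i) + PhiY K n m (f i))
      (fun j => ι K (Sum.inr j))))
    (FreeAlgebra.lift K (Sum.elim (fun i => ι K (Sum.inl i) - PhiY K n m (f i))
      (fun j => ι K (Sum.inr j))))
    (by
      apply FreeAlgebra.hom_ext
      funext g
      rcases g with i | j
      · have h1 := fix_PhiY (FreeAlgebra.lift K (Sum.elim (fun i => ι K (Sum.inl i) + PhiY K n m (f i))
          (fun j => ι K (Sum.inr j)))) (fun j => by simp)
        have h2 := DFunLike.congr_fun h1 (f i)
        simp only [AlgHom.comp_apply] at h2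
        simp [h2]
      · simp)
    (by
      apply FreeAlgebra.hom_ext
      funext g
      rcases g with i | j
      · have h1 := fix_PhiY (FreeAlgebra.lift K (Sum.elim (fun i => ι K (Sum.inl i) - PhiY K n m (f i))
          (fun j => ι K (Sum.inr j)))) (fun j => by simp)
        have h2 := DFunLike.congr_fun h1 (f i)
        simp only [AlgHom.comp_apply] at h2
        simp [h2]
      · simp)

@[simp] private lemma elemX_inl {K : Type} [Field K] {n m : ℕ}
    (f : Fin n → FreeAlgebra K (Fin m)) (i : Fin n) :
    elemX f (ι K (Sum.inl i)) = ι K (Sum.inl i) + PhiY K n m (f i) := by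
  simp [elemX]

@[simp] private lemma elemX_inr {K : Type} [Field K] {n m : ℕ}
    (f : Fin n → FreeAlgebra K (Fin m)) (j : Fin m) :
    elemX f (ι K (Sum.inr j)) = ι K (Sum.inr j) := by
  simp [elemX]

private lemma adjoin_range_of_surj {K : Type} [Field K] {n m : ℕ}
    {C : Type} [Ring C] [Algebra K C]
    (α : FreeAlgebra K (Fin n ⊕ Fin m) →ₐ[K] C)
    (hα : Function.Surjective α)
    (hαy : ∀ j : Fin m, α (ι K (Sum.inr j)) = 0) :
    Algebra.adjoin K (Set.range fun i : Fin n => α (ι K (Sum.inl i))) = ⊤ := by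
  rw [eq_top_iff]
  rintro z -
  obtain ⟨w, rfl⟩ := hα z
  induction w with
  | grade0 k => rw [AlgHom.commutes]; exact Subalgebra.algebraMap_mem _ k
  | grade1 g =>
      rcases g with i | j
      · exact Algebra.subset_adjoin ⟨i, rfl⟩
      · rw [hαy]; exact zero_mem _
  | add u v hu hv => rw [map_add]; exact add_mem hu hv
  | mul u v hu hv => rw [map_mul]; exact mul_mem hu hv

/-- If `C` is generated as a `K`-algebra by `m` elements and
`α, β : K⟨x₁,…,xₙ,y₁,…,y_m⟩ → C` are surjective algebra homomorphisms annihilating all the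
`y`-generators, then `α` and `β` are equivalent: `α = β ∘ τ` for some algebra automorphism
`τ` of the free algebra. -/
theorem surjective_homs_killing_y_equivalent
    {K : Type} [Field K] {n m : ℕ} (hn : 1 ≤ n) (hm : 1 ≤ m)
    {C : Type} [Ring C] [Algebra K C]
    (hC : ∃ c : Fin m → C, Algebra.adjoin K (Set.range c) = ⊤)
    (α β : FreeAlgebra K (Fin n ⊕ Fin m) →ₐ[K] C)
    (hα : Function.Surjective α) (hβ : Function.Surjective β)
    (hαy : ∀ j : Fin m, α (ι K (Sum.inr j)) = 0)
    (hβy : ∀ j : Fin m, β (ι K (Sum.inr j)) = 0) :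
    ∃ τ : FreeAlgebra K (Fin n ⊕ Fin m) ≃ₐ[K] FreeAlgebra K (Fin n ⊕ Fin m),
      ∀ a : FreeAlgebra K (Fin n ⊕ Fin m), α a = β (τ a) := by
  classical
  obtain ⟨c, hc⟩ := hC
  set Lb : FreeAlgebra K (Fin n) →ₐ[K] C :=
    FreeAlgebra.lift K (fun i => β (ι K (Sum.inl i))) with hLbdef
  set La : FreeAlgebra K (Fin n) →ₐ[K] C :=
    FreeAlgebra.lift K (fun i => α (ι K (Sum.inl i))) with hLadef
  set Lc : FreeAlgebra K (Fin m) →ₐ[K] C := FreeAlgebra.lift K c with hLcdef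
  have hLb : Function.Surjective Lb := by
    intro z
    have h1 : Algebra.adjoin K (Set.range fun i : Fin n => β (ι K (Sum.inl i))) ≤ Lb.range :=
      Algebra.adjoin_le (by rintro _ ⟨i, rfl⟩; exact ⟨FreeAlgebra.ι K i, by simp [hLbdef]⟩)
    rw [adjoin_range_of_surj β hβ hβy] at h1
    exact h1 (Algebra.mem_top : z ∈ ⊤)
  have hLa : Function.Surjective La := by
    intro z
    have h1 : Algebra.adjoin K (Set.range fun i : Fin n => α (ι K (Sum.inl i))) ≤ La.range :=
      Algebra.adjoin_le (by rintro _ ⟨i, rfl⟩; exact ⟨FreeAlgebra.ι K i, by simp [hLadef]⟩)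
    rw [adjoin_range_of_surj α hα hαy] at h1
    exact h1 (Algebra.mem_top : z ∈ ⊤)
  have hLc : Function.Surjective Lc := by
    intro z
    have h1 : Algebra.adjoin K (Set.range c) ≤ Lc.range :=
      Algebra.adjoin_le (by rintro _ ⟨j, rfl⟩; exact ⟨FreeAlgebra.ι K j, by simp [hLcdef]⟩)
    rw [hc] at h1
    exact h1 (Algebra.mem_top : z ∈ ⊤)
  choose R' hR' using fun j => hLb (c j)
  choose S' hS' using fun j => hLa (c j)
  choose P' hP' using fun i => hLc (α (ι K (Sum.inl i)))
  choose Q' hQ' using fun i => hLc (β (ι K (Sum.inl i)))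
  set e1 := elemY R' with he1
  set e2 := elemX (fun i => P' i - Q' i) with he2
  set e3 := elemY (fun j => -(S' j)) with he3
  refine ⟨e3.trans (e2.trans e1), ?_⟩
  -- β ∘ PhiX = Lb
  have hβΦX : β.comp (PhiX K n m) = Lb := by
    apply FreeAlgebra.hom_ext; funext i; simp [hLbdef]
  -- values of β ∘ e1 on generators
  have hβ1X : ∀ i, β (e1 (ι K (Sum.inl i))) = β (ι K (Sum.inl i)) := by
    intro i; rw [he1, elemY_inl]
  have hβ1Y : ∀ j, β (e1 (ι K (Sum.inr j))) = c j := by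
    intro j
    rw [he1, elemY_inr, map_add, hβy]
    have := DFunLike.congr_fun hβΦX (R' j)
    simp only [AlgHom.comp_apply] at this
    rw [this, hR', zero_add]
  -- β ∘ e1 ∘ PhiY = Lc
  have hβ1ΦY : (β.comp (e1 : FreeAlgebra K (Fin n ⊕ Fin m) →ₐ[K] FreeAlgebra K (Fin n ⊕ Fin m))).comp (PhiY K n m) = Lc := by
    apply FreeAlgebra.hom_ext; funext j
    simp only [Function.comp_apply, AlgHom.comp_apply, AlgHom.coe_coe, PhiY_ι]
    rw [hLcdef]
    simp only [FreeAlgebra.lift_ι_apply]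
    exact hβ1Y j
  -- values of β ∘ e1 ∘ e2 on generators
  have hβ2X : ∀ i, β (e1 (e2 (ι K (Sum.inl i)))) = α (ι K (Sum.inl i)) := by
    intro i
    rw [he2, elemX_inl, map_add, map_add, hβ1X]
    have := DFunLike.congr_fun hβ1ΦY (P' i - Q' i)
    simp only [AlgHom.comp_apply, AlgHom.coe_coe, AlgEquiv.toAlgHom_apply] at this
    rw [this, map_sub, hP', hQ']
    abel
  have hβ2Y : ∀ j, β (e1 (e2 (ι K (Sum.inr j)))) = c j := by
    intro j
    rw [he2, elemX_inr, hβ1Y]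
  -- β ∘ e1 ∘ e2 ∘ PhiX = La
  have hβ2ΦX : ((β.comp (e1 : FreeAlgebra K (Fin n ⊕ Fin m) →ₐ[K] FreeAlgebra K (Fin n ⊕ Fin m))).comp (e2 : FreeAlgebra K (Fin n ⊕ Fin m) →ₐ[K] FreeAlgebra K (Fin n ⊕ Fin m))).comp (PhiX K n m) = La := by
    apply FreeAlgebra.hom_ext; funext i
    simp only [Function.comp_apply, AlgHom.comp_apply, AlgHom.coe_coe, PhiX_ι]
    rw [hLadef]
    simp only [FreeAlgebra.lift_ι_apply]
    exact hβ2X i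
  have hfin : ∀ g, α (ι K g) = β (e1 (e2 (e3 (ι K g)))) := by
    rintro (i | j)
    · rw [he3, elemY_inl, hβ2X]
    · rw [he3, elemY_inr, map_add, map_add, map_add, hβ2Y]
      have := DFunLike.congr_fun hβ2ΦX (-(S' j))
      simp only [AlgHom.comp_apply, AlgHom.coe_coe, AlgEquiv.toAlgHom_apply] at this
      rw [this, map_neg, hS', hαy]
      abel
  have : α = β.comp ((((e1 : FreeAlgebra K (Fin n ⊕ Fin m) →ₐ[K] FreeAlgebra K (Fin n ⊕ Fin m)).comp (e2 : FreeAlgebra K (Fin n ⊕ Fin m) →ₐ[K] FreeAlgebra K (Fin n ⊕ Fin m))).comp (e3 : FreeAlgebra K (Fin n ⊕ Fin m) →ₐ[K] FreeAlgebra K (Fin n ⊕ Fin m)))) := by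
    apply FreeAlgebra.hom_ext; funext g
    simpa using hfin g
  intro a
  have := DFunLike.congr_fun this a
  simpa [AlgEquiv.trans_apply] using this
end

section
/- Let K be a field, n, m ≥ 1, A = FreeAlgebra K (Fin n), and let I and J be two-sided ideals of A such that the quotient K-algebras A/I and A/J are isomorphic as K-algebras and A/I is generated as a K-algebra by m elements. Let B = FreeAlgebra K (Fin n ⊕ Fin m), let κ : A →ₐ[K] B be the canonical embedding sending the i-th generator of A to x_i = ι(inl i), and let Ī (resp. J̄) be the two-sided ideal of B generated by κ(I) (resp. κ(J)) together with the generators y_1, …, y_m (y_j = ι(inr j)). Then Ī is equivalent to J̄: there exists a K-algebra automorphism σ of B with σ(Ī) = J̄. -/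
open FreeAlgebra

/-- The quotient of a (possibly noncommutative) `K`-algebra by a two-sided ideal,
realized via `RingQuot`. -/
abbrev TwoSidedIdeal.quotAlg (K : Type) {A : Type} [Field K] [Ring A] [Algebra K A]
    (I : TwoSidedIdeal A) : Type :=
  RingQuot (fun a b : A => a - b ∈ I)

section Helpers

variable {K : Type} [Field K]

lemma TwoSidedIdeal.span_le' {R : Type*} [NonUnitalNonAssocRing R] {s : Set R}
    {I : TwoSidedIdeal R} (h : s ⊆ I) : TwoSidedIdeal.span s ≤ I :=
  fun _ hx => TwoSidedIdeal.mem_span_iff.mp hx I h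

/-- If two algebra maps out of a free algebra agree modulo a two-sided ideal on generators,
they agree modulo the ideal everywhere. -/
lemma diff_mem {X C : Type*} [Ring C] [Algebra K C]
    (f g : FreeAlgebra K X →ₐ[K] C) (T : TwoSidedIdeal C)
    (h : ∀ i, f (ι K i) - g (ι K i) ∈ T) (a : FreeAlgebra K X) : f a - g a ∈ T := by
  induction a using FreeAlgebra.induction with
  | grade0 r => rw [AlgHom.commutes, AlgHom.commutes, sub_self]; exact T.zero_mem
  | grade1 x => exact h x
  | mul a b ha hb =>
      have : f (a * b) - g (a * b) = f a * (f b - g b) + (f a - g a) * g b := by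
        rw [map_mul, map_mul]; noncomm_ring
      rw [this]
      exact T.add_mem (T.mul_mem_left _ _ hb) (T.mul_mem_right _ _ ha)
  | add a b ha hb =>
      have : f (a + b) - g (a + b) = (f a - g a) + (f b - g b) := by
        rw [map_add, map_add]; abel
      rw [this]; exact T.add_mem ha hb

lemma mem_span_image_iff {C D : Type*} [Ring C] [Ring D] [Algebra K C] [Algebra K D]
    (σ : C ≃ₐ[K] D) (S : Set C) (b : C) :
    b ∈ TwoSidedIdeal.span S ↔ σ b ∈ TwoSidedIdeal.span (⇑σ '' S) := by
  constructor
  · intro hb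
    rw [TwoSidedIdeal.mem_span_iff] at hb
    have := hb (TwoSidedIdeal.comap σ.toAlgHom (TwoSidedIdeal.span (⇑σ '' S)))
      (fun z hz => (TwoSidedIdeal.mem_comap σ.toAlgHom).mpr
        (TwoSidedIdeal.subset_span ⟨z, hz, rfl⟩))
    exact (TwoSidedIdeal.mem_comap σ.toAlgHom).mp this
  · intro hb
    rw [TwoSidedIdeal.mem_span_iff] at hb
    have := hb (TwoSidedIdeal.comap σ.symm.toAlgHom (TwoSidedIdeal.span S))
      (fun z hz => ?_)
    · have h2 := (TwoSidedIdeal.mem_comap σ.symm.toAlgHom).mp this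
      rwa [AlgEquiv.coe_algHom, AlgEquiv.symm_apply_apply] at h2
    · obtain ⟨w, hw, rfl⟩ := hz
      refine (TwoSidedIdeal.mem_comap σ.symm.toAlgHom).mpr ?_
      rw [AlgEquiv.coe_algHom, AlgEquiv.symm_apply_apply]
      exact TwoSidedIdeal.subset_span hw

lemma mk_eq_zero_iff {A : Type} [Ring A] [Algebra K A] (I : TwoSidedIdeal A) (a : A) :
    RingQuot.mkAlgHom K (fun a b : A => a - b ∈ I) a = 0 ↔ a ∈ I := by
  constructor
  · intro h
    have hq : ∀ ⦃x y : A⦄, (fun a b : A => a - b ∈ I) x y →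
        I.ringCon.mk' x = I.ringCon.mk' y :=
      fun x y hxy => (RingCon.eq I.ringCon).mpr ((I.rel_iff x y).mpr hxy)
    have e : ∀ x : A, RingQuot.mkRingHom (fun a b : A => a - b ∈ I) x
        = RingQuot.mkAlgHom K (fun a b : A => a - b ∈ I) x := fun x =>
      (RingHom.congr_fun (RingQuot.mkAlgHom_coe K _) x).symm
    have h0 : RingQuot.mkRingHom (fun a b : A => a - b ∈ I) a
        = RingQuot.mkRingHom (fun a b : A => a - b ∈ I) 0 := by
      rw [e, e, h, map_zero]
    have h2 := congrArg (RingQuot.lift ⟨I.ringCon.mk', hq⟩) h0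
    rw [RingQuot.lift_mkRingHom_apply, RingQuot.lift_mkRingHom_apply] at h2
    have h3 : I.ringCon a 0 := (RingCon.eq I.ringCon).mp h2
    simpa using (I.rel_iff a 0).mp h3
  · intro h
    have : RingQuot.mkAlgHom K (fun a b : A => a - b ∈ I) a
        = RingQuot.mkAlgHom K (fun a b : A => a - b ∈ I) 0 :=
      RingQuot.mkAlgHom_rel K (by simpa using h)
    rw [this, map_zero]

end Helpers

section Main

variable {K : Type} [Field K] {n m : ℕ}

local notation "𝔸" => FreeAlgebra K (Fin n)
local notation "𝔹" => FreeAlgebra K (Fin n ⊕ Fin m)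
local notation "𝔽" => FreeAlgebra K (Fin m)

/-- The canonical embedding `K⟨x⟩ → K⟨x,y⟩`. -/
noncomputable def kap : 𝔸 →ₐ[K] 𝔹 :=
  FreeAlgebra.lift K fun i => ι K (Sum.inl i)

/-- The canonical embedding `K⟨y⟩ → K⟨x,y⟩`. -/
noncomputable def rho : 𝔽 →ₐ[K] 𝔹 :=
  FreeAlgebra.lift K fun j => ι K (Sum.inr j)

@[simp] lemma kap_ι (i : Fin n) : (kap (K := K) (m := m)) (ι K i) = ι K (Sum.inl i) :=
  FreeAlgebra.lift_ι_apply _ _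

@[simp] lemma rho_ι (j : Fin m) : (rho (K := K) (n := n)) (ι K j) = ι K (Sum.inr j) :=
  FreeAlgebra.lift_ι_apply _ _

/-- Substitution `y_j ↦ y_j + a_j(x)` as an algebra hom. -/
noncomputable def subYHom (a : Fin m → 𝔸) : 𝔹 →ₐ[K] 𝔹 :=
  FreeAlgebra.lift K (Sum.elim (fun i => ι K (Sum.inl i))
    (fun j => ι K (Sum.inr j) + kap (a j)))

@[simp] lemma subYHom_x (a : Fin m → 𝔸) (i : Fin n) :
    subYHom a (ι K (Sum.inl i)) = ι K (Sum.inl i) :=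
  FreeAlgebra.lift_ι_apply _ _

@[simp] lemma subYHom_y (a : Fin m → 𝔸) (j : Fin m) :
    subYHom a (ι K (Sum.inr j)) = ι K (Sum.inr j) + kap (a j) :=
  FreeAlgebra.lift_ι_apply _ _

lemma subYHom_comp_kap (a : Fin m → 𝔸) : (subYHom a).comp kap = kap :=
  FreeAlgebra.hom_ext (funext fun i => by simp [Function.comp])

@[simp] lemma subYHom_kap (a : Fin m → 𝔸) (b : 𝔸) : subYHom a (kap b) = kap b :=
  AlgHom.congr_fun (subYHom_comp_kap a) b

/-- Substitution `y_j ↦ y_j + a_j(x)` as an algebra automorphism. -/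
noncomputable def subY (a : Fin m → 𝔸) : 𝔹 ≃ₐ[K] 𝔹 :=
  AlgEquiv.ofAlgHom (subYHom a) (subYHom (-a))
    (FreeAlgebra.hom_ext (funext fun s => by
      cases s <;> simp [Function.comp, Pi.neg_apply, map_neg]))
    (FreeAlgebra.hom_ext (funext fun s => by
      cases s <;> simp [Function.comp, Pi.neg_apply, map_neg]))

@[simp] lemma subY_apply (a : Fin m → 𝔸) (b : 𝔹) : subY a b = subYHom a b := rfl

/-- Substitution `x_i ↦ x_i + p_i(y)` as an algebra hom. -/
noncomputable def subXHom (p : Fin n → 𝔽) : 𝔹 →ₐ[K] 𝔹 :=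
  FreeAlgebra.lift K (Sum.elim (fun i => ι K (Sum.inl i) + rho (p i))
    (fun j => ι K (Sum.inr j)))

@[simp] lemma subXHom_x (p : Fin n → 𝔽) (i : Fin n) :
    subXHom p (ι K (Sum.inl i)) = ι K (Sum.inl i) + rho (p i) :=
  FreeAlgebra.lift_ι_apply _ _

@[simp] lemma subXHom_y (p : Fin n → 𝔽) (j : Fin m) :
    subXHom p (ι K (Sum.inr j)) = ι K (Sum.inr j) :=
  FreeAlgebra.lift_ι_apply _ _

lemma subXHom_comp_rho (p : Fin n → 𝔽) : (subXHom p).comp rho = rho :=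
  FreeAlgebra.hom_ext (funext fun j => by simp [Function.comp])

@[simp] lemma subXHom_rho (p : Fin n → 𝔽) (g : 𝔽) : subXHom p (rho g) = rho g :=
  AlgHom.congr_fun (subXHom_comp_rho p) g

/-- Substitution `x_i ↦ x_i + p_i(y)` as an algebra automorphism. -/
noncomputable def subX (p : Fin n → 𝔽) : 𝔹 ≃ₐ[K] 𝔹 :=
  AlgEquiv.ofAlgHom (subXHom p) (subXHom (-p))
    (FreeAlgebra.hom_ext (funext fun s => by
      cases s <;> simp [Function.comp, Pi.neg_apply, map_neg]))
    (FreeAlgebra.hom_ext (funext fun s => by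
      cases s <;> simp [Function.comp, Pi.neg_apply, map_neg]))

@[simp] lemma subX_apply (p : Fin n → 𝔽) (b : 𝔹) : subX p b = subXHom p b := rfl

/-- The one-sided reduction: the extended ideal of `I` can be carried by an automorphism to
the "midpoint" ideal spanned by the relations of the chosen generators together with the `x`'s. -/
lemma sideReduce (I : TwoSidedIdeal 𝔸) (c' : Fin m → 𝔸) (P : Fin n → 𝔽)
    (hP : ∀ i, FreeAlgebra.lift K c' (P i) - ι K i ∈ I) :
    ∃ σ : 𝔹 ≃ₐ[K] 𝔹,
      ∀ b : 𝔹, b ∈ TwoSidedIdeal.span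
          (⇑(kap (K := K) (n := n) (m := m)) '' (I : Set 𝔸)
            ∪ Set.range fun j : Fin m => (ι K (Sum.inr j) : 𝔹))
      ↔ σ b ∈ TwoSidedIdeal.span
          (⇑(rho (K := K) (n := n) (m := m)) ''
              {g : 𝔽 | FreeAlgebra.lift K c' g ∈ I}
            ∪ Set.range fun i : Fin n => (ι K (Sum.inl i) : 𝔹)) := by
  classical
  set L : 𝔽 →ₐ[K] 𝔸 := FreeAlgebra.lift K c' with hLdef
  set S : 𝔸 →ₐ[K] 𝔽 := FreeAlgebra.lift K P with hSdef
  have hL : ∀ j, L (ι K j) = c' j := fun j => FreeAlgebra.lift_ι_apply _ _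
  have hS : ∀ i, S (ι K i) = P i := fun i => FreeAlgebra.lift_ι_apply _ _
  set σ₁ : 𝔹 ≃ₐ[K] 𝔹 := subY (-c') with hσ₁def
  set σ₂ : 𝔹 ≃ₐ[K] 𝔹 := subX P with hσ₂def
  set ψ : 𝔸 →ₐ[K] 𝔹 := (subXHom P).comp kap with hψdef
  have hψ : ∀ i, ψ (ι K i) = ι K (Sum.inl i) + rho (P i) := fun i => by
    simp [hψdef]
  -- the various generating sets
  set SI : Set 𝔹 := ⇑kap '' (I : Set 𝔸) ∪ Set.range fun j : Fin m => (ι K (Sum.inr j) : 𝔹)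
    with hSIdef
  set S1 : Set 𝔹 := ⇑kap '' (I : Set 𝔸)
      ∪ Set.range fun j : Fin m => ι K (Sum.inr j) - kap (c' j) with hS1def
  set S1' : Set 𝔹 := S1 ∪ Set.range fun i : Fin n => ι K (Sum.inl i) - rho (P i) with hS1'def
  set S2 : Set 𝔹 := (⇑ψ '' (I : Set 𝔸)
      ∪ Set.range fun j : Fin m => ι K (Sum.inr j) - ψ (c' j))
      ∪ Set.range fun i : Fin n => (ι K (Sum.inl i) : 𝔹) with hS2def
  set Rel : Set 𝔽 := {g : 𝔽 | L g ∈ I} with hReldef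
  set SM : Set 𝔹 := ⇑rho '' Rel ∪ Set.range fun i : Fin n => (ι K (Sum.inl i) : 𝔹) with hSMdef
  -- image computations
  have himg1 : ⇑σ₁ '' SI = S1 := by
    rw [hSIdef, hS1def, Set.image_union]
    congr 1
    · rw [Set.image_image]
      exact Set.image_congr' (fun a => by simp [hσ₁def])
    · rw [← Set.range_comp]
      refine congrArg Set.range (funext fun j => ?_)
      simp [hσ₁def, Pi.neg_apply, map_neg, sub_eq_add_neg]
  have himg2 : ⇑σ₂ '' S1' = S2 := by
    rw [hS1'def, hS1def, hS2def, Set.image_union, Set.image_union]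
    congr 2
    · rw [Set.image_image]
      exact Set.image_congr' (fun a => by simp [hσ₂def, hψdef])
    · rw [← Set.range_comp]
      refine congrArg Set.range (funext fun j => ?_)
      simp only [Function.comp_apply, hσ₂def, subX_apply, map_sub, subXHom_y]
      rw [hψdef]; simp
    · rw [← Set.range_comp]
      refine congrArg Set.range (funext fun i => ?_)
      simp [hσ₂def]
  -- ideal equality: adding the redundant generators x_i - P_i(y)
  have hseq1 : TwoSidedIdeal.span S1 = TwoSidedIdeal.span S1' := by
    refine le_antisymm (TwoSidedIdeal.span_mono Set.subset_union_left) ?_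
    refine TwoSidedIdeal.span_le' (Set.union_subset TwoSidedIdeal.subset_span ?_)
    rintro _ ⟨i, rfl⟩
    have t2 : ∀ g : 𝔽, (kap.comp L) g - rho g ∈ TwoSidedIdeal.span S1 := by
      intro g
      refine diff_mem _ _ _ (fun j => ?_) g
      have : (kap.comp L) (ι K j) - rho (ι K j)
          = -(ι K (Sum.inr j) - kap (c' j)) := by
        simp [hL]
      rw [this]
      exact (TwoSidedIdeal.span S1).neg_mem
        (TwoSidedIdeal.subset_span (Or.inr ⟨j, rfl⟩))
    have t1 : (ι K (Sum.inl i) : 𝔹) - kap (L (P i)) ∈ TwoSidedIdeal.span S1 := by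
      have hmem : ι K i - L (P i) ∈ I := by
        have := I.neg_mem (hP i); rwa [neg_sub] at this
      have : (ι K (Sum.inl i) : 𝔹) - kap (L (P i)) = kap (ι K i - L (P i)) := by
        rw [map_sub, kap_ι]
      rw [this]
      exact TwoSidedIdeal.subset_span (Or.inl ⟨_, hmem, rfl⟩)
    have := (TwoSidedIdeal.span S1).add_mem t1 (t2 (P i))
    simpa [AlgHom.comp_apply, sub_add_sub_cancel] using this
  -- ideal equality: S2 spans the same ideal as the midpoint SM
  have hLS : ∀ a : 𝔸, L (S a) - a ∈ I := by
    intro a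
    refine diff_mem (L.comp S) (AlgHom.id K 𝔸) I (fun i => ?_) a
    simpa [hS, hL] using hP i
  have d1 : ∀ a : 𝔸, ψ a - rho (S a) ∈ TwoSidedIdeal.span SM := by
    intro a
    refine diff_mem ψ (rho.comp S) _ (fun i => ?_) a
    have : ψ (ι K i) - (rho.comp S) (ι K i) = ι K (Sum.inl i) := by
      simp [hψ, hS]
    rw [this]
    exact TwoSidedIdeal.subset_span (Or.inr ⟨i, rfl⟩)
  have hseq2 : TwoSidedIdeal.span S2 = TwoSidedIdeal.span SM := by
    refine le_antisymm ?_ ?_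
    · refine TwoSidedIdeal.span_le' (Set.union_subset (Set.union_subset ?_ ?_) ?_)
      · rintro _ ⟨f, hf, rfl⟩
        have hrel : S f ∈ Rel := by
          have h0 : (L (S f) - f) + f ∈ I := I.add_mem (hLS f) hf
          rw [sub_add_cancel] at h0
          exact h0
        have h2 : rho (S f) ∈ TwoSidedIdeal.span SM :=
          TwoSidedIdeal.subset_span (Or.inl ⟨S f, hrel, rfl⟩)
        have := (TwoSidedIdeal.span SM).add_mem (d1 f) h2
        simpa [sub_add_cancel] using this
      · rintro _ ⟨j, rfl⟩
        have hrel : ι K j - S (c' j) ∈ Rel := by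
          have h0 : L (ι K j - S (c' j)) = -(L (S (c' j)) - c' j) := by
            rw [map_sub, hL]; abel
          show L (ι K j - S (c' j)) ∈ I
          rw [h0]
          exact I.neg_mem (hLS (c' j))
        have h1 : rho (ι K j - S (c' j)) ∈ TwoSidedIdeal.span SM :=
          TwoSidedIdeal.subset_span (Or.inl ⟨_, hrel, rfl⟩)
        have h2 : rho (S (c' j)) - ψ (c' j) ∈ TwoSidedIdeal.span SM := by
          have := (TwoSidedIdeal.span SM).neg_mem (d1 (c' j))
          rwa [neg_sub] at this
        have := (TwoSidedIdeal.span SM).add_mem h1 h2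
        have heq : rho (ι K j - S (c' j)) + (rho (S (c' j)) - ψ (c' j))
            = ι K (Sum.inr j) - ψ (c' j) := by
          rw [map_sub, rho_ι]; abel
        rwa [heq] at this
      · rintro _ ⟨i, rfl⟩
        exact TwoSidedIdeal.subset_span (Or.inr ⟨i, rfl⟩)
    · refine TwoSidedIdeal.span_le' (Set.union_subset ?_ ?_)
      · rintro _ ⟨g, hg, rfl⟩
        have d2 : rho g - ψ (L g) ∈ TwoSidedIdeal.span S2 := by
          refine diff_mem rho (ψ.comp L) _ (fun j => ?_) g
          have : rho (ι K j) - (ψ.comp L) (ι K j) = ι K (Sum.inr j) - ψ (c' j) := by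
            simp [hL]
          rw [this]
          exact TwoSidedIdeal.subset_span (Or.inl (Or.inr ⟨j, rfl⟩))
        have h2 : ψ (L g) ∈ TwoSidedIdeal.span S2 :=
          TwoSidedIdeal.subset_span (Or.inl (Or.inl ⟨L g, hg, rfl⟩))
        have := (TwoSidedIdeal.span S2).add_mem d2 h2
        simpa [sub_add_cancel] using this
      · rintro _ ⟨i, rfl⟩
        exact TwoSidedIdeal.subset_span (Or.inr ⟨i, rfl⟩)
  refine ⟨σ₁.trans σ₂, fun b => ?_⟩
  have step1 : b ∈ TwoSidedIdeal.span SI ↔ σ₁ b ∈ TwoSidedIdeal.span S1 := by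
    rw [mem_span_image_iff σ₁ SI b, himg1]
  have step2 : σ₁ b ∈ TwoSidedIdeal.span S1' ↔ σ₂ (σ₁ b) ∈ TwoSidedIdeal.span S2 := by
    rw [mem_span_image_iff σ₂ S1' (σ₁ b), himg2]
  have : (σ₁.trans σ₂) b = σ₂ (σ₁ b) := rfl
  rw [this]
  rw [show (TwoSidedIdeal.span (⇑rho '' {g : 𝔽 | FreeAlgebra.lift K c' g ∈ I}
      ∪ Set.range fun i : Fin n => (ι K (Sum.inl i) : 𝔹))) = TwoSidedIdeal.span SM from rfl]
  rw [← hseq2]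
  rw [← step2, ← hseq1]
  exact step1

end Main

/-- If `I` and `J` are two-sided ideals of the free algebra `A = K⟨x₁,…,xₙ⟩` with `A/I ≅ A/J`
as `K`-algebras and `A/I` generated by `m` elements, then the two-sided ideals `⟨I, y₁,…,y_m⟩`
and `⟨J, y₁,…,y_m⟩` of `K⟨x₁,…,xₙ,y₁,…,y_m⟩` are equivalent: some algebra automorphism `σ`
of the larger free algebra maps the one onto the other. -/
theorem extended_ideals_equivalent
    {K : Type} [Field K] {n m : ℕ} (hn : 1 ≤ n) (hm : 1 ≤ m)
    (I J : TwoSidedIdeal (FreeAlgebra K (Fin n)))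
    (hiso : Nonempty (I.quotAlg K ≃ₐ[K] J.quotAlg K))
    (hgen : ∃ c : Fin m → I.quotAlg K, Algebra.adjoin K (Set.range c) = ⊤) :
    ∃ σ : FreeAlgebra K (Fin n ⊕ Fin m) ≃ₐ[K] FreeAlgebra K (Fin n ⊕ Fin m),
      ∀ b : FreeAlgebra K (Fin n ⊕ Fin m),
        b ∈ TwoSidedIdeal.span
            ((FreeAlgebra.lift K fun i : Fin n =>
                (ι K (Sum.inl i) : FreeAlgebra K (Fin n ⊕ Fin m))) '' (I : Set (FreeAlgebra K (Fin n)))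
              ∪ Set.range fun j : Fin m => (ι K (Sum.inr j) : FreeAlgebra K (Fin n ⊕ Fin m)))
        ↔ σ b ∈ TwoSidedIdeal.span
            ((FreeAlgebra.lift K fun i : Fin n =>
                (ι K (Sum.inl i) : FreeAlgebra K (Fin n ⊕ Fin m))) '' (J : Set (FreeAlgebra K (Fin n)))
              ∪ Set.range fun j : Fin m => (ι K (Sum.inr j) : FreeAlgebra K (Fin n ⊕ Fin m))) := by
  classical
  obtain ⟨φ⟩ := hiso
  obtain ⟨c, hc⟩ := hgen
  -- quotient maps
  set πI : FreeAlgebra K (Fin n) →ₐ[K] I.quotAlg K :=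
    RingQuot.mkAlgHom K (fun a b => a - b ∈ I) with hπIdef
  set πJ : FreeAlgebra K (Fin n) →ₐ[K] J.quotAlg K :=
    RingQuot.mkAlgHom K (fun a b => a - b ∈ J) with hπJdef
  have hπIsurj : Function.Surjective πI := RingQuot.mkAlgHom_surjective K _
  have hπJsurj : Function.Surjective πJ := RingQuot.mkAlgHom_surjective K _
  -- lifts of the generators
  choose c' hc' using fun j => hπIsurj (c j)
  set e : Fin m → J.quotAlg K := fun j => φ (c j) with hedef
  choose d' hd' using fun j => hπJsurj (e j)
  -- evaluation maps
  set evc : FreeAlgebra K (Fin m) →ₐ[K] I.quotAlg K := FreeAlgebra.lift K c with hevcdef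
  set eve : FreeAlgebra K (Fin m) →ₐ[K] J.quotAlg K := FreeAlgebra.lift K e with hevedef
  have hevc_surj : Function.Surjective evc := by
    intro z
    have hle : Algebra.adjoin K (Set.range c) ≤ evc.range := by
      refine Algebra.adjoin_le ?_
      rintro _ ⟨j, rfl⟩
      exact ⟨ι K j, FreeAlgebra.lift_ι_apply _ _⟩
    have : z ∈ evc.range := hle (hc ▸ Algebra.mem_top)
    exact this
  have heve_eq : eve = φ.toAlgHom.comp evc := by
    refine FreeAlgebra.hom_ext (funext fun j => ?_)
    simp [hevedef, hevcdef, FreeAlgebra.lift_ι_apply, hedef]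
  have heve_surj : Function.Surjective eve := by
    rw [heve_eq]
    exact Function.Surjective.comp (g := ⇑φ.toAlgHom) φ.surjective hevc_surj
  -- `πI ∘ (lift at c') = evc`, `πJ ∘ (lift at d') = eve`
  have hπIL : πI.comp (FreeAlgebra.lift K c') = evc := by
    refine FreeAlgebra.hom_ext (funext fun j => ?_)
    simp [hevcdef, FreeAlgebra.lift_ι_apply, hc']
  have hπJL : πJ.comp (FreeAlgebra.lift K d') = eve := by
    refine FreeAlgebra.hom_ext (funext fun j => ?_)
    simp [hevedef, FreeAlgebra.lift_ι_apply, hd']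
  -- choose the P's
  choose P hPspec using fun i => hevc_surj (πI (ι K i))
  choose P' hP'spec using fun i => heve_surj (πJ (ι K i))
  have hP : ∀ i, FreeAlgebra.lift K c' (P i) - ι K i ∈ I := by
    intro i
    rw [← mk_eq_zero_iff (K := K) I]
    have h1 : πI (FreeAlgebra.lift K c' (P i)) = evc (P i) := AlgHom.congr_fun hπIL (P i)
    show πI (FreeAlgebra.lift K c' (P i) - ι K i) = 0
    rw [map_sub, h1, hPspec, sub_self]
  have hP' : ∀ i, FreeAlgebra.lift K d' (P' i) - ι K i ∈ J := by
    intro i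
    rw [← mk_eq_zero_iff (K := K) J]
    have h1 : πJ (FreeAlgebra.lift K d' (P' i)) = eve (P' i) := AlgHom.congr_fun hπJL (P' i)
    show πJ (FreeAlgebra.lift K d' (P' i) - ι K i) = 0
    rw [map_sub, h1, hP'spec, sub_self]
  -- the relation ideals agree
  have hRel : {g : FreeAlgebra K (Fin m) | FreeAlgebra.lift K c' g ∈ I}
      = {g : FreeAlgebra K (Fin m) | FreeAlgebra.lift K d' g ∈ J} := by
    ext g
    simp only [Set.mem_setOf_eq]
    rw [← mk_eq_zero_iff (K := K) I, ← mk_eq_zero_iff (K := K) J]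
    have h1 : πI (FreeAlgebra.lift K c' g) = evc g := AlgHom.congr_fun hπIL g
    have h2 : πJ (FreeAlgebra.lift K d' g) = eve g := AlgHom.congr_fun hπJL g
    show πI _ = 0 ↔ πJ _ = 0
    rw [h1, h2, heve_eq]
    constructor
    · intro h; simp [AlgHom.comp_apply, h]
    · intro h
      have := φ.injective (a₁ := evc g) (a₂ := 0) (by simpa using h)
      exact this
  obtain ⟨σI, hσI⟩ := sideReduce I c' P hP
  obtain ⟨σJ, hσJ⟩ := sideReduce J d' P' hP'
  refine ⟨σI.trans σJ.symm, fun b => ?_⟩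
  have h1 := hσI b
  have h2 := hσJ ((σI.trans σJ.symm) b)
  have h3 : σJ ((σI.trans σJ.symm) b) = σI b := by
    show σJ (σJ.symm (σI b)) = σI b
    exact σJ.apply_symm_apply _
  rw [h3, ← hRel] at h2
  exact h1.trans h2.symm
end

section
/- Let K be a field, let A and B be associative unital K-algebras, and let I ⊆ A and J ⊆ B be two-sided ideals. Let Γ and Δ denote the ℤ-gradings of the extended Rees algebras R_A(I) and R_B(J) by powers of T. Then the following are equivalent: (1) there exists a graded K-algebra isomorphism R_A(I) ≅ R_B(J); (2) there exists a graded K-algebra isomorphism R_A(I) ≅ R_B(J) that maps T to T (a graded K[t]-isomorphism); (3) there exists a K-algebra isomorphism θ : A ≅ B with θ(I) = J. -/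
open scoped AddMonoidAlgebra

section Rees

variable {K : Type} [Field K] {A : Type} [Ring A] [Algebra K A]

/-- A `K`-submodule of `A` is a two-sided ideal if it absorbs multiplication by arbitrary
ring elements on both sides. -/
def Submodule.IsTwoSidedIdeal (I : Submodule K A) : Prop :=
  ∀ a : A, ∀ x ∈ I, a * x ∈ I ∧ x * a ∈ I

theorem Submodule.IsTwoSidedIdeal.mul_mem_pow_left {I : Submodule K A}
    (hI : I.IsTwoSidedIdeal) {l : ℕ} (hl : l ≠ 0) (a : A) {x : A} (hx : x ∈ I ^ l) :
    a * x ∈ I ^ l := by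
  obtain ⟨l, rfl⟩ := Nat.exists_eq_succ_of_ne_zero hl
  rw [pow_succ'] at hx ⊢
  refine Submodule.mul_induction_on hx (fun m hm n hn => ?_) (fun x y hx hy => ?_)
  · rw [← mul_assoc]
    exact Submodule.mul_mem_mul ((hI a m hm).1) hn
  · rw [mul_add]
    exact add_mem hx hy

theorem Submodule.IsTwoSidedIdeal.mul_mem_pow_right {I : Submodule K A}
    (hI : I.IsTwoSidedIdeal) {l : ℕ} (hl : l ≠ 0) (a : A) {x : A} (hx : x ∈ I ^ l) :
    x * a ∈ I ^ l := by
  obtain ⟨l, rfl⟩ := Nat.exists_eq_succ_of_ne_zero hl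
  rw [pow_succ] at hx ⊢
  refine Submodule.mul_induction_on hx (fun m hm n hn => ?_) (fun x y hx hy => ?_)
  · rw [mul_assoc]
    exact Submodule.mul_mem_mul hm ((hI a n hn).2)
  · rw [add_mul]
    exact add_mem hx hy

theorem Submodule.IsTwoSidedIdeal.pow_le_pow {I : Submodule K A}
    (hI : I.IsTwoSidedIdeal) {l m : ℕ} (hl : l ≠ 0) (h : l ≤ m) :
    I ^ m ≤ I ^ l := by
  induction m, h using Nat.le_induction with
  | base => exact le_rfl
  | succ m hm ih =>
      rw [pow_succ]
      refine Submodule.mul_le.mpr fun x hx y hy => ?_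
      exact hI.mul_mem_pow_right hl y (ih hx)

/-- The extended Rees algebra of a two-sided ideal `I` of `A`:  the subalgebra of the Laurent
polynomial algebra `A[T,T⁻¹] = AddMonoidAlgebra A ℤ` consisting of the Laurent polynomials
`∑ₖ aₖ Tᵏ` with `aₖ ∈ I^(-k)` for every `k < 0`. -/
def extendedReesAlgebra (I : Submodule K A) (hI : I.IsTwoSidedIdeal) :
    Subalgebra K (AddMonoidAlgebra A ℤ) where
  carrier := {p | ∀ k : ℤ, k < 0 → p.coeff k ∈ I ^ (-k).toNat}
  zero_mem' := by
    intro k hk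
    simp only [AddMonoidAlgebra.coeff_zero, Finsupp.coe_zero, Pi.zero_apply]
    exact zero_mem _
  add_mem' := by
    intro p q hp hq k hk
    rw [AddMonoidAlgebra.coeff_add, Finsupp.add_apply]
    exact add_mem (hp k hk) (hq k hk)
  one_mem' := by
    intro k hk
    rw [AddMonoidAlgebra.one_def, AddMonoidAlgebra.coeff_single, Finsupp.single_apply, if_neg (by omega)]
    exact zero_mem _
  mul_mem' := by
    intro p q hp hq k hk
    classical
    rw [AddMonoidAlgebra.coeff_mul]
    refine Submodule.sum_mem _ fun i hi => Submodule.sum_mem _ fun j hj => ?_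
    show (if i + j = k then p.coeff i * q.coeff j else 0) ∈ I ^ (-k).toNat
    split_ifs with hij
    · by_cases h1 : i < 0 <;> by_cases h2 : j < 0
      · have h3 : (-i).toNat + (-j).toNat = (-k).toNat := by omega
        rw [← h3, pow_add]
        exact Submodule.mul_mem_mul (hp i h1) (hq j h2)
      · exact hI.mul_mem_pow_right (by omega) _
          (hI.pow_le_pow (by omega) (by omega) (hp i h1))
      · exact hI.mul_mem_pow_left (by omega) _
          (hI.pow_le_pow (by omega) (by omega) (hq j h2))
      · omega
    · exact zero_mem _
  algebraMap_mem' := by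
    intro c k hk
    rw [AddMonoidAlgebra.coe_algebraMap]
    simp only [Function.comp_apply]
    rw [AddMonoidAlgebra.coeff_single, Finsupp.single_apply, if_neg (by omega)]
    exact zero_mem _

end Rees

section Rees2

variable {K : Type} [Field K] {A : Type} [Ring A] [Algebra K A]

/-- The Laurent variable `T` in `A[T,T⁻¹] = AddMonoidAlgebra A ℤ`. -/
noncomputable def laurentT (A : Type) [Ring A] : AddMonoidAlgebra A ℤ :=
  AddMonoidAlgebra.single 1 1

theorem laurentT_mem (I : Submodule K A) (hI : I.IsTwoSidedIdeal) :
    laurentT A ∈ extendedReesAlgebra I hI := by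
  intro k hk
  rw [laurentT, AddMonoidAlgebra.coeff_single, Finsupp.single_apply, if_neg (by omega)]
  exact zero_mem _

/-- An algebra isomorphism between two extended Rees algebras is *graded* if it maps elements
homogeneous of degree `k` to elements homogeneous of degree `k`, for every `k ∈ ℤ`. -/
def IsGradedReesIso {B : Type} [Ring B] [Algebra K B]
    {I : Submodule K A} {hI : I.IsTwoSidedIdeal}
    {J : Submodule K B} {hJ : J.IsTwoSidedIdeal}
    (e : extendedReesAlgebra I hI ≃ₐ[K] extendedReesAlgebra J hJ) : Prop :=
  ∀ (x : extendedReesAlgebra I hI) (k : ℤ),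
    (x : AddMonoidAlgebra A ℤ).coeff.support ⊆ {k} →
      ((e x : AddMonoidAlgebra B ℤ)).coeff.support ⊆ {k}

end Rees2



section AuxProof

set_option maxHeartbeats 1000000
set_option synthInstance.maxHeartbeats 400000

variable {K : Type} [Field K] {A : Type} [Ring A] [Algebra K A]
  {B : Type} [Ring B] [Algebra K B]
  {I : Submodule K A} {hI : I.IsTwoSidedIdeal}
  {J : Submodule K B} {hJ : J.IsTwoSidedIdeal}

theorem single_mul_single' {R : Type} [Ring R] (i j : ℤ) (a b : R) :
    (AddMonoidAlgebra.single i a : AddMonoidAlgebra R ℤ) * AddMonoidAlgebra.single j b =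
      AddMonoidAlgebra.single (i + j) (a * b) :=
  AddMonoidAlgebra.single_mul_single ..

theorem single_coeff_mem (x : extendedReesAlgebra I hI) (j : ℤ) :
    (AddMonoidAlgebra.single j ((x : AddMonoidAlgebra A ℤ).coeff j) : AddMonoidAlgebra A ℤ)
      ∈ extendedReesAlgebra I hI := by
  intro k hk
  rw [AddMonoidAlgebra.coeff_single, Finsupp.single_apply]
  split_ifs with h
  · subst h; exact x.2 j hk
  · exact zero_mem _

theorem single_zero_mem (a : A) :
    (AddMonoidAlgebra.single 0 a : AddMonoidAlgebra A ℤ) ∈ extendedReesAlgebra I hI := by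
  intro k hk
  rw [AddMonoidAlgebra.coeff_single, Finsupp.single_apply, if_neg (by omega)]
  exact zero_mem _

theorem single_neg_one_mem {a : A} (ha : a ∈ I) :
    (AddMonoidAlgebra.single (-1) a : AddMonoidAlgebra A ℤ) ∈ extendedReesAlgebra I hI := by
  intro k hk
  rw [AddMonoidAlgebra.coeff_single, Finsupp.single_apply]
  split_ifs with h
  · subst h
    simpa using ha
  · exact zero_mem _

theorem rees_decomposition (x : extendedReesAlgebra I hI) :
    x = ∑ j ∈ (x : AddMonoidAlgebra A ℤ).coeff.support,
        (⟨AddMonoidAlgebra.single j ((x : AddMonoidAlgebra A ℤ).coeff j), single_coeff_mem x j⟩ :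
          extendedReesAlgebra I hI) := by
  apply Subtype.ext
  rw [AddSubmonoidClass.coe_finset_sum]
  exact (AddMonoidAlgebra.sum_coeff_single (x : AddMonoidAlgebra A ℤ)).symm

theorem IsGradedReesIso.symm
    {e : extendedReesAlgebra I hI ≃ₐ[K] extendedReesAlgebra J hJ}
    (he : IsGradedReesIso e) : IsGradedReesIso e.symm := by
  intro y k hy j hj
  rw [Finset.mem_singleton]
  by_contra hjk
  set x := e.symm y with hx
  have hdec : y = ∑ j' ∈ (x : AddMonoidAlgebra A ℤ).coeff.support,
      e ⟨AddMonoidAlgebra.single j' ((x : AddMonoidAlgebra A ℤ).coeff j'), single_coeff_mem x j'⟩ := by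
    rw [← map_sum, ← rees_decomposition, hx, e.apply_symm_apply]
  have hyj : (y : AddMonoidAlgebra B ℤ).coeff j = 0 := by
    by_contra h
    exact hjk (Finset.mem_singleton.mp (hy (Finsupp.mem_support_iff.mpr h)))
  have hsum : (y : AddMonoidAlgebra B ℤ).coeff j =
      ∑ j' ∈ (x : AddMonoidAlgebra A ℤ).coeff.support,
        ((e ⟨AddMonoidAlgebra.single j' ((x : AddMonoidAlgebra A ℤ).coeff j'), single_coeff_mem x j'⟩ :
          extendedReesAlgebra J hJ) : AddMonoidAlgebra B ℤ).coeff j := by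
    rw [hdec, AddSubmonoidClass.coe_finset_sum, AddMonoidAlgebra.coeff_sum, Finsupp.finset_sum_apply]
  have hterm : ∀ j' ∈ (x : AddMonoidAlgebra A ℤ).coeff.support, j' ≠ j →
      ((e ⟨AddMonoidAlgebra.single j' ((x : AddMonoidAlgebra A ℤ).coeff j'), single_coeff_mem x j'⟩ :
        extendedReesAlgebra J hJ) : AddMonoidAlgebra B ℤ).coeff j = 0 := by
    intro j' _ hj'
    by_contra h
    have := he ⟨AddMonoidAlgebra.single j' ((x : AddMonoidAlgebra A ℤ).coeff j'), single_coeff_mem x j'⟩ j'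
      Finsupp.support_single_subset (Finsupp.mem_support_iff.mpr h)
    exact hj' (Finset.mem_singleton.mp this).symm
  have hmain : ((e ⟨AddMonoidAlgebra.single j ((x : AddMonoidAlgebra A ℤ).coeff j), single_coeff_mem x j⟩ :
      extendedReesAlgebra J hJ) : AddMonoidAlgebra B ℤ).coeff j = 0 := by
    rw [hsum] at hyj
    rwa [Finset.sum_eq_single j (fun j' h1 h2 => hterm j' h1 h2)
      (fun h => absurd hj h)] at hyj
  have hzero : (e ⟨AddMonoidAlgebra.single j ((x : AddMonoidAlgebra A ℤ).coeff j), single_coeff_mem x j⟩ :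
      extendedReesAlgebra J hJ) = 0 := by
    apply Subtype.ext
    have hsupp := he ⟨AddMonoidAlgebra.single j ((x : AddMonoidAlgebra A ℤ).coeff j), single_coeff_mem x j⟩ j
      Finsupp.support_single_subset
    have h4 := Finsupp.support_subset_singleton.mp hsupp
    apply AddMonoidAlgebra.coeff_injective
    rw [h4, hmain, Finsupp.single_zero]
    rfl
  have h6 : (⟨AddMonoidAlgebra.single j ((x : AddMonoidAlgebra A ℤ).coeff j), single_coeff_mem x j⟩ :
      extendedReesAlgebra I hI) = 0 := by
    apply e.injective
    rw [hzero, map_zero]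
  have hxj0 : (x : AddMonoidAlgebra A ℤ).coeff j = 0 := by
    have h5 : (AddMonoidAlgebra.single j ((x : AddMonoidAlgebra A ℤ).coeff j) : AddMonoidAlgebra A ℤ).coeff j
        = (0 : AddMonoidAlgebra A ℤ).coeff j :=
      congrArg (fun z : extendedReesAlgebra I hI => (z : AddMonoidAlgebra A ℤ).coeff j) h6
    rwa [AddMonoidAlgebra.coeff_single, Finsupp.single_eq_same, AddMonoidAlgebra.coeff_zero,
        Finsupp.zero_apply] at h5
  exact Finsupp.mem_support_iff.mp hj hxj0

/-- The degree-zero part of a graded iso. -/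
noncomputable def degZeroFun (e : extendedReesAlgebra I hI ≃ₐ[K] extendedReesAlgebra J hJ)
    (a : A) : B :=
  ((e ⟨AddMonoidAlgebra.single 0 a, single_zero_mem a⟩ : extendedReesAlgebra J hJ) :
    AddMonoidAlgebra B ℤ).coeff 0

theorem e_single_zero {e : extendedReesAlgebra I hI ≃ₐ[K] extendedReesAlgebra J hJ}
    (he : IsGradedReesIso e) (a : A) :
    ((e ⟨AddMonoidAlgebra.single 0 a, single_zero_mem a⟩ : extendedReesAlgebra J hJ) :
      AddMonoidAlgebra B ℤ) = AddMonoidAlgebra.single 0 (degZeroFun e a) :=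
  AddMonoidAlgebra.coeff_injective <| Finsupp.support_subset_singleton.mp
    (he ⟨AddMonoidAlgebra.single 0 a, single_zero_mem a⟩ 0 Finsupp.support_single_subset)

theorem degZero_symm {e : extendedReesAlgebra I hI ≃ₐ[K] extendedReesAlgebra J hJ}
    (he : IsGradedReesIso e) (a : A) :
    degZeroFun e.symm (degZeroFun e a) = a := by
  have h1 : (⟨AddMonoidAlgebra.single 0 (degZeroFun e a), single_zero_mem _⟩ :
      extendedReesAlgebra J hJ) = e ⟨AddMonoidAlgebra.single 0 a, single_zero_mem a⟩ :=
    Subtype.ext (e_single_zero he a).symm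
  show ((e.symm ⟨AddMonoidAlgebra.single 0 (degZeroFun e a), single_zero_mem _⟩ :
      extendedReesAlgebra I hI) : AddMonoidAlgebra A ℤ).coeff 0 = a
  rw [h1, e.symm_apply_apply]
  exact Finsupp.single_eq_same

theorem degZeroFun_mem {e : extendedReesAlgebra I hI ≃ₐ[K] extendedReesAlgebra J hJ}
    (he : IsGradedReesIso e) {a : A} (ha : a ∈ I) :
    degZeroFun e a ∈ J := by
  set x1 : extendedReesAlgebra I hI := ⟨AddMonoidAlgebra.single (-1) a, single_neg_one_mem ha⟩ with hx1
  set t : extendedReesAlgebra I hI := ⟨laurentT A, laurentT_mem I hI⟩ with ht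
  have hx1' : (x1 : AddMonoidAlgebra A ℤ) = AddMonoidAlgebra.single (-1) a := rfl
  have ht' : (t : AddMonoidAlgebra A ℤ) = AddMonoidAlgebra.single 1 1 := rfl
  have h1 : x1 * t = ⟨AddMonoidAlgebra.single 0 a, single_zero_mem a⟩ := by
    apply Subtype.ext
    rw [Subalgebra.coe_mul, hx1', ht', single_mul_single']
    show AddMonoidAlgebra.single (-1 + 1 : ℤ) (a * 1) = AddMonoidAlgebra.single (0 : ℤ) a
    norm_num
  set b : B := ((e x1 : extendedReesAlgebra J hJ) : AddMonoidAlgebra B ℤ).coeff (-1) with hb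
  set c : B := ((e t : extendedReesAlgebra J hJ) : AddMonoidAlgebra B ℤ).coeff 1 with hc
  have hbval : ((e x1 : extendedReesAlgebra J hJ) : AddMonoidAlgebra B ℤ) =
      AddMonoidAlgebra.single (-1) b :=
    AddMonoidAlgebra.coeff_injective <| Finsupp.support_subset_singleton.mp (he x1 (-1) Finsupp.support_single_subset)
  have hcval : ((e t : extendedReesAlgebra J hJ) : AddMonoidAlgebra B ℤ) =
      AddMonoidAlgebra.single 1 c :=
    AddMonoidAlgebra.coeff_injective <| Finsupp.support_subset_singleton.mp (he t 1 Finsupp.support_single_subset)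
  have hbJ : b ∈ J := by
    have := (e x1).2 (-1) (by norm_num)
    simpa using this
  have hkey : AddMonoidAlgebra.single (0 : ℤ) (degZeroFun e a) = AddMonoidAlgebra.single (0 : ℤ) (b * c) := by
    rw [← e_single_zero he a, ← h1, map_mul, Subalgebra.coe_mul, hbval, hcval,
      single_mul_single']
    norm_num
  have h2 : degZeroFun e a = b * c := AddMonoidAlgebra.single_right_injective hkey
  rw [h2]
  exact (hJ c b hbJ).2

/-- The degree-zero algebra isomorphism extracted from a graded Rees iso. -/
noncomputable def degZeroEquiv (e : extendedReesAlgebra I hI ≃ₐ[K] extendedReesAlgebra J hJ)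
    (he : IsGradedReesIso e) : A ≃ₐ[K] B where
  toFun := degZeroFun e
  invFun := degZeroFun e.symm
  left_inv := degZero_symm he
  right_inv := by
    intro b
    have := degZero_symm he.symm b
    rwa [AlgEquiv.symm_symm] at this
  map_add' := by
    intro a b
    have h1 : (⟨AddMonoidAlgebra.single 0 (a + b), single_zero_mem _⟩ : extendedReesAlgebra I hI) =
        ⟨AddMonoidAlgebra.single 0 a, single_zero_mem a⟩ + ⟨AddMonoidAlgebra.single 0 b, single_zero_mem b⟩ := by
      apply Subtype.ext
      rw [Subalgebra.coe_add]
      show AddMonoidAlgebra.single (0 : ℤ) (a + b) =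
        (AddMonoidAlgebra.single 0 a : AddMonoidAlgebra A ℤ) + AddMonoidAlgebra.single 0 b
      rw [AddMonoidAlgebra.single_add]
    show degZeroFun e (a + b) = degZeroFun e a + degZeroFun e b
    show ((e ⟨AddMonoidAlgebra.single 0 (a + b), single_zero_mem _⟩ : extendedReesAlgebra J hJ) :
      AddMonoidAlgebra B ℤ).coeff 0 = _
    rw [h1, map_add, Subalgebra.coe_add, AddMonoidAlgebra.coeff_add, Finsupp.add_apply]
    rfl
  map_mul' := by
    intro a b
    have hA : ((⟨AddMonoidAlgebra.single 0 a, single_zero_mem a⟩ : extendedReesAlgebra I hI) :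
        AddMonoidAlgebra A ℤ) = AddMonoidAlgebra.single 0 a := rfl
    have hB : ((⟨AddMonoidAlgebra.single 0 b, single_zero_mem b⟩ : extendedReesAlgebra I hI) :
        AddMonoidAlgebra A ℤ) = AddMonoidAlgebra.single 0 b := rfl
    have h1 : (⟨AddMonoidAlgebra.single 0 (a * b), single_zero_mem _⟩ : extendedReesAlgebra I hI) =
        ⟨AddMonoidAlgebra.single 0 a, single_zero_mem a⟩ * ⟨AddMonoidAlgebra.single 0 b, single_zero_mem b⟩ := by
      apply Subtype.ext
      rw [Subalgebra.coe_mul, hA, hB, single_mul_single']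
      show AddMonoidAlgebra.single (0 : ℤ) (a * b) = AddMonoidAlgebra.single (0 + 0 : ℤ) (a * b)
      norm_num
    apply (AddMonoidAlgebra.single_right_injective :
        Function.Injective (AddMonoidAlgebra.single (0 : ℤ) : B → AddMonoidAlgebra B ℤ))
    show AddMonoidAlgebra.single (0 : ℤ) (degZeroFun e (a * b)) = _
    rw [← e_single_zero he (a * b), h1, map_mul, Subalgebra.coe_mul,
      e_single_zero he a, e_single_zero he b, single_mul_single']
    norm_num
  commutes' := by
    intro c
    have h1 : (⟨AddMonoidAlgebra.single 0 (algebraMap K A c), single_zero_mem _⟩ :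
        extendedReesAlgebra I hI) = algebraMap K (extendedReesAlgebra I hI) c := by
      apply Subtype.ext
      rw [Subalgebra.coe_algebraMap]
      show AddMonoidAlgebra.single (0 : ℤ) (algebraMap K A c) =
        algebraMap K (AddMonoidAlgebra A ℤ) c
      rfl
    show degZeroFun e (algebraMap K A c) = algebraMap K B c
    show ((e ⟨AddMonoidAlgebra.single 0 (algebraMap K A c), single_zero_mem _⟩ :
      extendedReesAlgebra J hJ) : AddMonoidAlgebra B ℤ).coeff 0 = algebraMap K B c
    rw [h1, AlgEquiv.commutes, Subalgebra.coe_algebraMap]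
    show (AddMonoidAlgebra.single (0 : ℤ) (algebraMap K B c) : AddMonoidAlgebra B ℤ).coeff 0 = algebraMap K B c
    exact Finsupp.single_eq_same

theorem mapRange_mul (θ : A ≃ₐ[K] B) (p q : AddMonoidAlgebra A ℤ) :
    AddMonoidAlgebra.ofCoeff (Finsupp.mapRange θ (map_zero θ) (p * q).coeff) =
      AddMonoidAlgebra.ofCoeff (Finsupp.mapRange θ (map_zero θ) p.coeff) *
        AddMonoidAlgebra.ofCoeff (Finsupp.mapRange θ (map_zero θ) q.coeff) := by
  have h : ∀ r : AddMonoidAlgebra A ℤ,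
      AddMonoidAlgebra.ofCoeff (Finsupp.mapRange θ (map_zero θ) r.coeff) =
        AddMonoidAlgebra.mapAlgHom ℤ (θ : A →ₐ[K] B) r := by
    intro r
    ext k
    simp
  rw [h, h, h, map_mul]

theorem map_mem_pow (θ : A ≃ₐ[K] B) (h : ∀ a ∈ I, θ a ∈ J) :
    ∀ n : ℕ, ∀ x ∈ I ^ (n + 1), θ x ∈ J ^ (n + 1) := by
  intro n
  induction n with
  | zero =>
      intro x hx
      simpa [pow_one] using h x (by simpa [pow_one] using hx)
  | succ n ih =>
      intro x hx
      rw [pow_succ] at hx ⊢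
      refine Submodule.mul_induction_on hx (fun m hm y hy => ?_) (fun a b ha hb => ?_)
      · rw [map_mul]; exact Submodule.mul_mem_mul (ih m hm) (h y hy)
      · rw [map_add]; exact add_mem ha hb

theorem mapRange_mem (θ : A ≃ₐ[K] B) (h : ∀ a ∈ I, θ a ∈ J)
    (x : extendedReesAlgebra I hI) :
      AddMonoidAlgebra.ofCoeff (Finsupp.mapRange θ (map_zero θ) (x : AddMonoidAlgebra A ℤ).coeff)
        ∈ extendedReesAlgebra J hJ := by
  intro k hk
  rw [AddMonoidAlgebra.coeff_ofCoeff, Finsupp.mapRange_apply]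
  obtain ⟨n, hn⟩ : ∃ n : ℕ, (-k).toNat = n + 1 := ⟨(-k).toNat - 1, by omega⟩
  rw [hn]
  exact map_mem_pow θ h n _ (hn ▸ x.2 k hk)

/-- The Rees iso induced by an isomorphism of pairs. -/
noncomputable def reesEquivOf (θ : A ≃ₐ[K] B) (hIJ : ∀ a : A, a ∈ I ↔ θ a ∈ J)
    (hI : I.IsTwoSidedIdeal) (hJ : J.IsTwoSidedIdeal) :
    extendedReesAlgebra I hI ≃ₐ[K] extendedReesAlgebra J hJ where
  toFun x := ⟨AddMonoidAlgebra.ofCoeff (Finsupp.mapRange θ (map_zero θ) (x : AddMonoidAlgebra A ℤ).coeff),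
    mapRange_mem θ (fun a ha => (hIJ a).mp ha) x⟩
  invFun y := ⟨AddMonoidAlgebra.ofCoeff
      (Finsupp.mapRange θ.symm (map_zero θ.symm) (y : AddMonoidAlgebra B ℤ).coeff),
    mapRange_mem θ.symm (fun b hb => by
      rw [← θ.apply_symm_apply b] at hb
      exact (hIJ _).mpr hb) y⟩
  left_inv x := Subtype.ext (by
    ext k
    simp [AddMonoidAlgebra.coeff_ofCoeff, Finsupp.mapRange_apply])
  right_inv y := Subtype.ext (by
    ext k
    simp [AddMonoidAlgebra.coeff_ofCoeff, Finsupp.mapRange_apply])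
  map_add' x y := Subtype.ext (by
    show AddMonoidAlgebra.ofCoeff (Finsupp.mapRange θ (map_zero θ) ((x + y : extendedReesAlgebra I hI) :
      AddMonoidAlgebra A ℤ).coeff) = _
    rw [Subalgebra.coe_add, AddMonoidAlgebra.coeff_add, Finsupp.mapRange_add (map_add θ)]
    rfl)
  map_mul' x y := Subtype.ext (by
    show AddMonoidAlgebra.ofCoeff (Finsupp.mapRange θ (map_zero θ) ((x * y : extendedReesAlgebra I hI) :
      AddMonoidAlgebra A ℤ).coeff) = _
    rw [Subalgebra.coe_mul, Subalgebra.coe_mul, mapRange_mul])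
  commutes' c := Subtype.ext (by
    show AddMonoidAlgebra.ofCoeff (Finsupp.mapRange θ (map_zero θ)
        ((algebraMap K (extendedReesAlgebra I hI) c : extendedReesAlgebra I hI) :
          AddMonoidAlgebra A ℤ).coeff) = _
    rw [Subalgebra.coe_algebraMap]
    show AddMonoidAlgebra.ofCoeff (Finsupp.mapRange θ (map_zero θ)
        (AddMonoidAlgebra.single 0 (algebraMap K A c)).coeff) =
      algebraMap K (AddMonoidAlgebra B ℤ) c
    rw [AddMonoidAlgebra.coeff_single, Finsupp.mapRange_single, AlgEquiv.commutes]
    rfl)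

end AuxProof

set_option maxHeartbeats 1000000 in
set_option synthInstance.maxHeartbeats 400000 in
theorem rees_iso_tfae {K : Type} [Field K]
    {A : Type} [Ring A] [Algebra K A] {B : Type} [Ring B] [Algebra K B]
    (I : Submodule K A) (hI : I.IsTwoSidedIdeal)
    (J : Submodule K B) (hJ : J.IsTwoSidedIdeal) :
    List.TFAE
      [ ∃ e : extendedReesAlgebra I hI ≃ₐ[K] extendedReesAlgebra J hJ, IsGradedReesIso e,
        ∃ e : extendedReesAlgebra I hI ≃ₐ[K] extendedReesAlgebra J hJ, IsGradedReesIso e ∧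
          e ⟨laurentT A, laurentT_mem I hI⟩ = ⟨laurentT B, laurentT_mem J hJ⟩,
        ∃ θ : A ≃ₐ[K] B, ∀ a : A, a ∈ I ↔ θ a ∈ J ] := by
  tfae_have 1 → 3
  · rintro ⟨e, he⟩
    refine ⟨degZeroEquiv e he, fun a => ⟨fun ha => degZeroFun_mem he ha, fun ha => ?_⟩⟩
    have h2 : degZeroFun e.symm (degZeroFun e a) ∈ I := degZeroFun_mem he.symm ha
    rwa [degZero_symm he a] at h2
  tfae_have 3 → 2
  · rintro ⟨θ, hθ⟩
    have h1 : IsGradedReesIso (reesEquivOf θ hθ hI hJ) := by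
      intro x k hx j hj
      exact hx (Finsupp.support_mapRange (hf := map_zero θ) hj)
    have h2 : reesEquivOf θ hθ hI hJ ⟨laurentT A, laurentT_mem I hI⟩ =
        ⟨laurentT B, laurentT_mem J hJ⟩ := by
      apply Subtype.ext
      show AddMonoidAlgebra.ofCoeff (Finsupp.mapRange θ (map_zero θ) (laurentT A).coeff) = laurentT B
      rw [laurentT, laurentT, AddMonoidAlgebra.coeff_single, Finsupp.mapRange_single, map_one,
        AddMonoidAlgebra.ofCoeff_single]
    exact ⟨reesEquivOf θ hθ hI hJ, h1, h2⟩
  tfae_have 2 → 1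
  · rintro ⟨e, he, _⟩
    exact ⟨e, he⟩
  tfae_finish
end

section
/- Let K be a field, n, r ≥ 1, and let σ be a linearizable regular action of T_r = (K^×)^r on F_n = FreeAlgebra K (Fin n). Then there exists a maximal two-sided ideal M of F_n that is fixed by the action: σ(t)(M) = M for every t ∈ (Kˣ)^r. (Namely, M may be taken to be the two-sided ideal generated by a linearizing system of free generators β(z_1), …, β(z_n), whose quotient is K.) -/
open FreeAlgebra

/-- A torus action on the free algebra is *linearizable* if some algebra automorphism `β`
conjugates it into an action mapping each generator into the linear span of the generators. -/
def TorusActionIsLinearizable {K : Type} [Field K] {n r : ℕ}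
    (σ : (Fin r → Kˣ) →* (FreeAlgebra K (Fin n) ≃ₐ[K] FreeAlgebra K (Fin n))) : Prop :=
  ∃ β : FreeAlgebra K (Fin n) ≃ₐ[K] FreeAlgebra K (Fin n),
    ∀ (t : Fin r → Kˣ) (i : Fin n),
      β.symm (σ t (β (ι K i))) ∈
        Submodule.span K (Set.range (ι K : Fin n → FreeAlgebra K (Fin n)))

/-- A linearizable regular torus action on the free algebra fixes some maximal two-sided
ideal `M` (namely, the ideal generated by a linearizing system of free generators):
`σ(t)(M) = M` for all `t`. -/
theorem linearizable_action_fixes_maximal_ideal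
    {K : Type} [Field K] {n r : ℕ} (hn : 1 ≤ n) (hr : 1 ≤ r)
    (σ : (Fin r → Kˣ) →* (FreeAlgebra K (Fin n) ≃ₐ[K] FreeAlgebra K (Fin n)))
    (hreg : TorusActionIsRegular σ)
    (hlin : TorusActionIsLinearizable σ) :
    ∃ M : TwoSidedIdeal (FreeAlgebra K (Fin n)),
      IsCoatom M ∧ ∀ (t : Fin r → Kˣ) (x : FreeAlgebra K (Fin n)), x ∈ M ↔ σ t x ∈ M := by
  obtain ⟨β, hβ⟩ := hlin
  set ε : FreeAlgebra K (Fin n) →ₐ[K] K := FreeAlgebra.lift K (fun _ => (0 : K)) with hε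
  set φ : FreeAlgebra K (Fin n) →ₐ[K] K := ε.comp β.symm.toAlgHom with hφ
  -- key: φ ∘ σ t = φ
  have key : ∀ (t : Fin r → Kˣ) (x : FreeAlgebra K (Fin n)), φ (σ t x) = φ x := by
    intro t x
    have h1 : (φ.comp (σ t).toAlgHom).comp β.toAlgHom = φ.comp β.toAlgHom := by
      apply FreeAlgebra.hom_ext
      funext i
      have h2 := hβ t i
      simp only [Function.comp, AlgHom.coe_comp, AlgEquiv.coe_algHom]
      have hspan : ∀ y ∈ Submodule.span K (Set.range (ι K : Fin n → FreeAlgebra K (Fin n))),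
          ε y = 0 := by
        intro y hy
        refine Submodule.span_induction ?_ ?_ ?_ ?_ hy
        · rintro _ ⟨i, rfl⟩; simp [hε]
        · simp
        · intro a b _ _ ha hb; simp [ha, hb]
        · intro c a _ ha; simp [ha]
      have e1 : φ (σ t (β (ι K i))) = ε (β.symm (σ t (β (ι K i)))) := rfl
      have e2 : φ (β (ι K i)) = ε (ι K i) := by
        simp [hφ]
      simp only [e1, e2, hspan _ h2]
      simp [hε]
    have h4 := DFunLike.congr_fun h1 (β.symm x)
    simpa using h4
  refine ⟨TwoSidedIdeal.ker φ, ⟨?_, ?_⟩, ?_⟩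
  · -- M ≠ ⊤
    intro htop
    have h1 : (1 : FreeAlgebra K (Fin n)) ∈ TwoSidedIdeal.ker φ := by
      rw [htop]; exact TwoSidedIdeal.mem_top _
    rw [TwoSidedIdeal.mem_ker] at h1
    simp at h1
  · -- maximality
    intro J hJ
    rw [lt_iff_le_and_ne] at hJ
    obtain ⟨hle, hne⟩ := hJ
    obtain ⟨x, hxJ, hxM⟩ : ∃ x, x ∈ J ∧ x ∉ TwoSidedIdeal.ker φ := by
      by_contra h
      push_neg at h
      exact hne (le_antisymm hle h)
    rw [TwoSidedIdeal.mem_ker] at hxM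
    have hsub : x - algebraMap K (FreeAlgebra K (Fin n)) (φ x) ∈ TwoSidedIdeal.ker φ := by
      rw [TwoSidedIdeal.mem_ker]
      simp
    have hc : algebraMap K (FreeAlgebra K (Fin n)) (φ x) ∈ J := by
      have : x - (x - algebraMap K (FreeAlgebra K (Fin n)) (φ x)) ∈ J :=
        J.sub_mem hxJ (hle hsub)
      simpa using this
    have hone : (1 : FreeAlgebra K (Fin n)) ∈ J := by
      have := J.mul_mem_left (algebraMap K (FreeAlgebra K (Fin n)) (φ x)⁻¹) _ hc
      rwa [← map_mul, inv_mul_cancel₀ hxM, map_one] at this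
    rw [eq_top_iff]
    intro y _
    have := J.mul_mem_left y _ hone
    simpa using this
  · intro t x
    rw [TwoSidedIdeal.mem_ker, TwoSidedIdeal.mem_ker, key]
end
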